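/- arXiv:2107.10362 — 5 statements merged into one kernel-verified Lean document; each statement's English description precedes it below -/
import Mathlib

section
/- Let n ≥ 3 and d ≥ 2, and let (x^1, …, x^n; C) be a hard ball evolution with n balls in ℝ^d satisfying the normalizations (A3) and (A4), and let t₀ be the unique time such that ⟨x(t), v(t+)⟩ < 0 for t < t₀ and ⟨x(t), v(t+)⟩ > 0 for t > t₀. Then: (i) there is a partition of {1, …, n} into two nonempty sets S and T such that no collision at a time t ∈ C with t ≥ t₀ + 100 n³ |x(t₀)| involves one ball with index in S and one ball with index in T; and (ii) there is a (possibly different) partition of {1, …, n} into two nonempty sets S′ and T′ such that no collision at a time t ∈ C with t ≤ t₀ − 100 n³ |x(t₀)| involves one ball with index in S′ and one ball with index in T′. -/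
/-- A hard ball evolution of `n` balls of radius 1 and equal mass in `ℝ^d`.
`x j` is the center of the `j`-th ball as a function of time, `C` is the set
of collision times, and `vL j t`, `vR j t` are the left and right velocities
`v^j(t−)`, `v^j(t+)`. -/
structure HardBallEvolution (n d : ℕ) where
  /-- centers of the balls -/
  x : Fin n → ℝ → EuclideanSpace ℝ (Fin d)
  /-- left velocities `v^j(t−)` -/
  vL : Fin n → ℝ → EuclideanSpace ℝ (Fin d)
  /-- right velocities `v^j(t+)` -/
  vR : Fin n → ℝ → EuclideanSpace ℝ (Fin d)
  /-- the set of collision times -/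
  C : Set ℝ
  closed_C : IsClosed C
  discrete_C : ∀ t ∈ C, ∃ ε > 0, ∀ s ∈ C, |s - t| < ε → s = t
  cont : ∀ j, Continuous (x j)
  /-- the balls never overlap -/
  noOverlap : ∀ j k, j ≠ k → ∀ t, 2 ≤ ‖x j t - x k t‖
  /-- `x j` is affine to the right of each time `t`, with slope `vR j t` -/
  affineR : ∀ j t, ∃ ε > 0, ∀ s, t ≤ s → s < t + ε → x j s = x j t + (s - t) • vR j t
  /-- `x j` is affine to the left of each time `t`, with slope `vL j t` -/
  affineL : ∀ j t, ∃ ε > 0, ∀ s, t - ε < s → s ≤ t → x j s = x j t + (s - t) • vL j t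
  /-- velocities change only at collision times -/
  noKink : ∀ j, ∀ t, t ∉ C → vR j t = vL j t
  /-- at each collision time there is exactly one touching pair `j ≠ k` with
  `‖x j t - x k t‖ = 2`; the velocities of this pair are transformed by the
  elastic collision law with `u = (x j t - x k t)/‖x j t - x k t‖`, while all
  other velocities are unchanged -/
  collision : ∀ t ∈ C, ∃ j k : Fin n, j ≠ k ∧ ‖x j t - x k t‖ = 2 ∧
    (∀ j' k' : Fin n, j' ≠ k' → ‖x j' t - x k' t‖ = 2 →
      (j' = j ∧ k' = k) ∨ (j' = k ∧ k' = j)) ∧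
    (inner ℝ (vL j t - vL k t) (‖x j t - x k t‖⁻¹ • (x j t - x k t)) : ℝ) < 0 ∧
    vR j t = vL j t +
      (inner ℝ (vL k t - vL j t) (‖x j t - x k t‖⁻¹ • (x j t - x k t)) : ℝ) •
        (‖x j t - x k t‖⁻¹ • (x j t - x k t)) ∧
    vR k t = vL k t +
      (inner ℝ (vL j t - vL k t) (‖x j t - x k t‖⁻¹ • (x j t - x k t)) : ℝ) •
        (‖x j t - x k t‖⁻¹ • (x j t - x k t)) ∧
    ∀ i, i ≠ j → i ≠ k → vR i t = vL i t

namespace HardBallEvolution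

variable {n d : ℕ}

/-- The collision at time `t ∈ C` involves balls `j` and `k`. -/
def involves (E : HardBallEvolution n d) (t : ℝ) (j k : Fin n) : Prop :=
  t ∈ E.C ∧ j ≠ k ∧ ‖E.x j t - E.x k t‖ = 2

/-- `|x(t)|`, the Euclidean norm of the configuration vector in `ℝ^{dn}`. -/
noncomputable def xnorm (E : HardBallEvolution n d) (t : ℝ) : ℝ :=
  Real.sqrt (∑ j, ‖E.x j t‖ ^ 2)

/-- `⟨x(t), v(t+)⟩`, the Euclidean inner product in `ℝ^{dn}`. -/
noncomputable def xvInner (E : HardBallEvolution n d) (t : ℝ) : ℝ :=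
  ∑ j, (inner ℝ (E.x j t) (E.vR j t) : ℝ)

/-- Normalization (A3): total momentum zero and center of mass at the origin. -/
def A3 (E : HardBallEvolution n d) : Prop :=
  (∀ t : ℝ, ∑ j, E.x j t = 0) ∧ (∀ t : ℝ, ∑ j, E.vR j t = 0)

/-- Normalization (A4): total kinetic energy equal to 1. -/
def A4 (E : HardBallEvolution n d) : Prop :=
  ∀ t : ℝ, ∑ j, ‖E.vR j t‖ ^ 2 = 1

end HardBallEvolution

open Set

namespace HBX

variable {n d : ℕ}

noncomputable abbrev Conf (n d : ℕ) := WithLp 2 (∀ _ : Fin n, EuclideanSpace ℝ (Fin d))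

noncomputable def Xc (E : HardBallEvolution n d) (t : ℝ) : Conf n d :=
  (WithLp.equiv 2 _).symm (fun j => E.x j t)

noncomputable def Vr (E : HardBallEvolution n d) (t : ℝ) : Conf n d :=
  (WithLp.equiv 2 _).symm (fun j => E.vR j t)

noncomputable def Vl (E : HardBallEvolution n d) (t : ℝ) : Conf n d :=
  (WithLp.equiv 2 _).symm (fun j => E.vL j t)

noncomputable def fR (E : HardBallEvolution n d) (t : ℝ) : ℝ := inner ℝ (Xc E t) (Vr E t)
noncomputable def fLv (E : HardBallEvolution n d) (t : ℝ) : ℝ := inner ℝ (Xc E t) (Vl E t)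
noncomputable def rr (E : HardBallEvolution n d) (t : ℝ) : ℝ := ‖Xc E t‖
noncomputable def Jr (E : HardBallEvolution n d) (t : ℝ) : ℝ := rr E t ^ 2 - fR E t ^ 2
noncomputable def Jl (E : HardBallEvolution n d) (t : ℝ) : ℝ := rr E t ^ 2 - fLv E t ^ 2

lemma Xc_apply (E : HardBallEvolution n d) (t : ℝ) (j : Fin n) : Xc E t j = E.x j t := rfl

lemma norm_conf_sq (z : Conf n d) : ‖z‖ ^ 2 = ∑ j, ‖z j‖ ^ 2 := by
  rw [PiLp.norm_sq_eq_of_L2]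

lemma inner_conf (z w : Conf n d) : (inner ℝ z w : ℝ) = ∑ j, (inner ℝ (z j) (w j) : ℝ) := by
  rw [PiLp.inner_apply]

lemma coord_norm_le (z : Conf n d) (j : Fin n) : ‖z j‖ ≤ ‖z‖ := by
  have h := norm_conf_sq z
  nlinarith [norm_nonneg z, norm_nonneg (z j),
    Finset.single_le_sum (f := fun i => ‖z i‖ ^ 2) (fun i _ => by positivity) (Finset.mem_univ j)]

lemma fR_eq_xvInner (E : HardBallEvolution n d) (t : ℝ) : fR E t = E.xvInner t := by
  rw [fR, inner_conf]; rfl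

lemma rr_sq (E : HardBallEvolution n d) (t : ℝ) : rr E t ^ 2 = ∑ j, ‖E.x j t‖ ^ 2 := by
  rw [rr, norm_conf_sq]; rfl

lemma xnorm_eq_rr (E : HardBallEvolution n d) (t : ℝ) : E.xnorm t = rr E t := by
  rw [HardBallEvolution.xnorm, ← rr_sq]; exact Real.sqrt_sq (norm_nonneg _)

lemma rr_nonneg (E : HardBallEvolution n d) (t : ℝ) : 0 ≤ rr E t := norm_nonneg _

lemma contX (E : HardBallEvolution n d) : Continuous (Xc E) := by
  have h1 : Continuous (fun t => (fun j => E.x j t : ∀ _ : Fin n, EuclideanSpace ℝ (Fin d))) :=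
    continuous_pi fun j => E.cont j
  exact (PiLp.continuous_toLp 2
    (fun _ : Fin n => EuclideanSpace ℝ (Fin d))).comp h1

lemma cont_rr (E : HardBallEvolution n d) : Continuous (rr E) := (contX E).norm

lemma inner_Vr_self (E : HardBallEvolution n d) (hA4 : E.A4) (t : ℝ) :
    (inner ℝ (Vr E t) (Vr E t) : ℝ) = 1 := by
  rw [inner_conf]
  have : ∀ j : Fin n, (inner ℝ (Vr E t j) (Vr E t j) : ℝ) = ‖E.vR j t‖ ^ 2 := fun j => by
    rw [real_inner_self_eq_norm_sq]; rfl
  simp only [this]; exact hA4 t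

lemma norm_Vr (E : HardBallEvolution n d) (hA4 : E.A4) (t : ℝ) : ‖Vr E t‖ = 1 := by
  have h := inner_Vr_self E hA4 t
  rw [real_inner_self_eq_norm_sq] at h
  nlinarith [norm_nonneg (Vr E t)]

/-- two-point slope cancellation -/
lemma slope_cancel {V : Type*} [NormedAddCommGroup V] [NormedSpace ℝ V]
    {a b : ℝ} (hne : b ≠ a) {w₁ w₂ : V} (h : (b - a) • w₁ = (b - a) • w₂) : w₁ = w₂ :=
  smul_right_injective V (sub_ne_zero.2 hne) h

/-- right-propagation of the right velocity -/
lemma vR_right (E : HardBallEvolution n d) (j : Fin n) (t : ℝ) :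
    ∃ ε > 0, ∀ s, t ≤ s → s < t + ε →
      E.vR j s = E.vR j t ∧ E.x j s = E.x j t + (s - t) • E.vR j t := by
  obtain ⟨ε, hε, hR⟩ := E.affineR j t
  refine ⟨ε, hε, fun s hts hst => ?_⟩
  have hx := hR s hts hst
  rcases eq_or_lt_of_le hts with rfl | hlt
  · exact ⟨rfl, hx⟩
  · obtain ⟨ε₃, hε₃, hR₃⟩ := E.affineR j s
    set ρ := s + min (t + ε - s) ε₃ / 2 with hρdef
    have hmin : 0 < min (t + ε - s) ε₃ := lt_min (by linarith) hε₃
    have hsρ : s < ρ := by simp only [hρdef]; linarith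
    have hρ1 : ρ < t + ε := by
      have := min_le_left (t + ε - s) ε₃; simp only [hρdef]; linarith
    have hρ2 : ρ < s + ε₃ := by
      have := min_le_right (t + ε - s) ε₃; simp only [hρdef]; linarith
    have h1 : E.x j ρ = E.x j t + (ρ - t) • E.vR j t := hR ρ (by linarith) hρ1
    have h2 : E.x j ρ = E.x j s + (ρ - s) • E.vR j s := hR₃ ρ hsρ.le hρ2
    have : (ρ - s) • E.vR j s = (ρ - s) • E.vR j t := by
      have h3 : E.x j ρ - E.x j s = (ρ - s) • E.vR j s := by rw [h2]; abel
      rw [h1, hx] at h3; rw [← h3]; module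
    exact ⟨slope_cancel hsρ.ne' this, hx⟩

/-- left-propagation of the right velocity, assuming no kink at `t` -/
lemma vR_left (E : HardBallEvolution n d) (j : Fin n) {t : ℝ} (hk : E.vR j t = E.vL j t) :
    ∃ ε > 0, ∀ s, t - ε < s → s < t →
      E.vR j s = E.vR j t ∧ E.x j s = E.x j t + (s - t) • E.vR j t := by
  obtain ⟨ε, hε, hL⟩ := E.affineL j t
  refine ⟨ε, hε, fun s hts hst => ?_⟩
  have hx : E.x j s = E.x j t + (s - t) • E.vR j t := by rw [hk]; exact hL s hts hst.le
  obtain ⟨ε₃, hε₃, hR₃⟩ := E.affineR j s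
  set ρ := s + min (t - s) ε₃ / 2 with hρdef
  have hmin : 0 < min (t - s) ε₃ := lt_min (by linarith) hε₃
  have hsρ : s < ρ := by simp only [hρdef]; linarith
  have hρ1 : ρ < t := by
    have := min_le_left (t - s) ε₃; simp only [hρdef]; linarith
  have hρ2 : ρ < s + ε₃ := by
    have := min_le_right (t - s) ε₃; simp only [hρdef]; linarith
  have h1 : E.x j ρ = E.x j t + (ρ - t) • E.vR j t := by
    rw [hk]; exact hL ρ (by linarith) hρ1.le
  have h2 : E.x j ρ = E.x j s + (ρ - s) • E.vR j s := hR₃ ρ hsρ.le hρ2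
  have : (ρ - s) • E.vR j s = (ρ - s) • E.vR j t := by
    have h3 : E.x j ρ - E.x j s = (ρ - s) • E.vR j t := by
      rw [h1, hx]; module
    rw [← h3, h2]; abel
  exact ⟨slope_cancel hsρ.ne' this, hx⟩

end HBX
namespace HBX

variable {n d : ℕ}

/-- On a collision-free open interval the motion is affine. -/
lemma piece (E : HardBallEvolution n d) {p q : ℝ} (hpq : p < q)
    (hfree : ∀ s ∈ Ioo p q, s ∉ E.C) (j : Fin n) :
    (∀ τ ∈ Icc p q, E.x j τ = E.x j p + (τ - p) • E.vR j p) ∧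
    (∀ τ ∈ Ioo p q, E.vR j τ = E.vR j p) ∧ E.vL j q = E.vR j p := by
  set V := E.vR j p with hV
  -- local two-sided constancy at interior points
  have hloc : ∀ σ ∈ Ioo p q, ∃ ε > 0, ∀ ρ ∈ Ioo (σ - ε) (σ + ε),
      E.vR j ρ = E.vR j σ ∧ E.x j ρ = E.x j σ + (ρ - σ) • E.vR j σ := by
    intro σ hσ
    have hk : E.vR j σ = E.vL j σ := E.noKink j σ (hfree σ hσ)
    obtain ⟨ε₁, hε₁, hR⟩ := vR_right E j σ
    obtain ⟨ε₂, hε₂, hL⟩ := vR_left E j hk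
    refine ⟨min ε₁ ε₂, lt_min hε₁ hε₂, fun ρ hρ => ?_⟩
    rcases le_or_gt σ ρ with h | h
    · exact hR ρ h (lt_of_lt_of_le hρ.2 (by
        have := min_le_left ε₁ ε₂; linarith))
    · exact hL ρ (by have := min_le_right ε₁ ε₂; linarith [hρ.1]) h
  -- vR is constant on the open interval
  have hconst : ∀ τ ∈ Ioo p q, E.vR j τ = V := by
    by_contra hcon
    push_neg at hcon
    obtain ⟨τ, hτ, hτne⟩ := hcon
    obtain ⟨εp, hεp, hRp⟩ := vR_right E j p
    set σ₀ := min (p + εp / 2) ((p + q) / 2) with hσ₀def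
    have hσ₀1 : p < σ₀ := lt_min (by linarith) (by linarith)
    have hσ₀2 : σ₀ < q := lt_of_le_of_lt (min_le_right _ _) (by linarith)
    have hσ₀3 : σ₀ < p + εp := lt_of_le_of_lt (min_le_left _ _) (by linarith)
    have hσ₀V : E.vR j σ₀ = V := (hRp σ₀ hσ₀1.le hσ₀3).1
    set W : Set ℝ := {σ | σ ∈ Ioo p q ∧ E.vR j σ = V} with hWdef
    set W' : Set ℝ := {σ | σ ∈ Ioo p q ∧ E.vR j σ ≠ V} with hW'def
    have hWopen : IsOpen W := by
      rw [isOpen_iff_mem_nhds]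
      rintro σ ⟨hσIoo, hσV⟩
      obtain ⟨ε, hε, hcst⟩ := hloc σ hσIoo
      have : Ioo (max (σ - ε) p) (min (σ + ε) q) ∈ nhds σ :=
        Ioo_mem_nhds (by simp [hσIoo.1, hε]) (by simp [hσIoo.2, hε])
      refine Filter.mem_of_superset this ?_
      rintro ρ ⟨h1, h2⟩
      have hρIoo : ρ ∈ Ioo p q := ⟨lt_of_le_of_lt (le_max_right _ _) h1,
        lt_of_lt_of_le h2 (min_le_right _ _)⟩
      have := (hcst ρ ⟨lt_of_le_of_lt (le_max_left _ _) h1,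
        lt_of_lt_of_le h2 (min_le_left _ _)⟩).1
      exact ⟨hρIoo, this.trans hσV⟩
    have hW'open : IsOpen W' := by
      rw [isOpen_iff_mem_nhds]
      rintro σ ⟨hσIoo, hσV⟩
      obtain ⟨ε, hε, hcst⟩ := hloc σ hσIoo
      have : Ioo (max (σ - ε) p) (min (σ + ε) q) ∈ nhds σ :=
        Ioo_mem_nhds (by simp [hσIoo.1, hε]) (by simp [hσIoo.2, hε])
      refine Filter.mem_of_superset this ?_
      rintro ρ ⟨h1, h2⟩
      have hρIoo : ρ ∈ Ioo p q := ⟨lt_of_le_of_lt (le_max_right _ _) h1,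
        lt_of_lt_of_le h2 (min_le_right _ _)⟩
      have := (hcst ρ ⟨lt_of_le_of_lt (le_max_left _ _) h1,
        lt_of_lt_of_le h2 (min_le_left _ _)⟩).1
      exact ⟨hρIoo, fun hc => hσV (this.symm.trans hc)⟩
    have hsub : Ioo p q ⊆ W ∪ W' := by
      intro σ hσ
      by_cases h : E.vR j σ = V
      · exact Or.inl ⟨hσ, h⟩
      · exact Or.inr ⟨hσ, h⟩
    obtain ⟨z, hz⟩ := isPreconnected_Ioo (a := p) (b := q) W W' hWopen hW'open hsub
      ⟨σ₀, ⟨hσ₀1, hσ₀2⟩, ⟨hσ₀1, hσ₀2⟩, hσ₀V⟩ ⟨τ, hτ, hτ, hτne⟩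
    exact hz.2.2.2 hz.2.1.2
  -- x is affine on the open interval
  have hxIoo : ∀ τ ∈ Ioo p q, E.x j τ = E.x j p + (τ - p) • V := by
    by_contra hcon
    push_neg at hcon
    obtain ⟨τ, hτ, hτne⟩ := hcon
    obtain ⟨εp, hεp, hRp⟩ := vR_right E j p
    set σ₀ := min (p + εp / 2) ((p + q) / 2) with hσ₀def
    have hσ₀1 : p < σ₀ := lt_min (by linarith) (by linarith)
    have hσ₀2 : σ₀ < q := lt_of_le_of_lt (min_le_right _ _) (by linarith)
    have hσ₀3 : σ₀ < p + εp := lt_of_le_of_lt (min_le_left _ _) (by linarith)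
    have hσ₀V : E.x j σ₀ = E.x j p + (σ₀ - p) • V := (hRp σ₀ hσ₀1.le hσ₀3).2
    set W : Set ℝ := {σ | σ ∈ Ioo p q ∧ E.x j σ = E.x j p + (σ - p) • V} with hWdef
    set W' : Set ℝ := {σ | σ ∈ Ioo p q ∧ E.x j σ ≠ E.x j p + (σ - p) • V} with hW'def
    have key : ∀ σ ∈ Ioo p q, ∃ ε > 0, ∀ ρ ∈ Ioo (σ - ε) (σ + ε), ρ ∈ Ioo p q →
        (E.x j ρ = E.x j p + (ρ - p) • V ↔ E.x j σ = E.x j p + (σ - p) • V) := by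
      intro σ hσ
      obtain ⟨ε, hε, hcst⟩ := hloc σ hσ
      refine ⟨ε, hε, fun ρ hρ hρIoo => ?_⟩
      have h2 := (hcst ρ hρ).2
      rw [hconst σ hσ] at h2
      constructor
      · intro h
        have h4 : E.x j σ = E.x j ρ - (ρ - σ) • V := by rw [h2]; abel
        rw [h4, h]; module
      · intro h; rw [h2, h]; module
    have hWopen : IsOpen W := by
      rw [isOpen_iff_mem_nhds]
      rintro σ ⟨hσIoo, hσV⟩
      obtain ⟨ε, hε, hcst⟩ := key σ hσIoo
      have : Ioo (max (σ - ε) p) (min (σ + ε) q) ∈ nhds σ :=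
        Ioo_mem_nhds (by simp [hσIoo.1, hε]) (by simp [hσIoo.2, hε])
      refine Filter.mem_of_superset this ?_
      rintro ρ ⟨h1, h2⟩
      have hρIoo : ρ ∈ Ioo p q := ⟨lt_of_le_of_lt (le_max_right _ _) h1,
        lt_of_lt_of_le h2 (min_le_right _ _)⟩
      refine ⟨hρIoo, ?_⟩
      exact (hcst ρ ⟨lt_of_le_of_lt (le_max_left _ _) h1,
        lt_of_lt_of_le h2 (min_le_left _ _)⟩ hρIoo).2 hσV
    have hW'open : IsOpen W' := by
      rw [isOpen_iff_mem_nhds]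
      rintro σ ⟨hσIoo, hσV⟩
      obtain ⟨ε, hε, hcst⟩ := key σ hσIoo
      have : Ioo (max (σ - ε) p) (min (σ + ε) q) ∈ nhds σ :=
        Ioo_mem_nhds (by simp [hσIoo.1, hε]) (by simp [hσIoo.2, hε])
      refine Filter.mem_of_superset this ?_
      rintro ρ ⟨h1, h2⟩
      have hρIoo : ρ ∈ Ioo p q := ⟨lt_of_le_of_lt (le_max_right _ _) h1,
        lt_of_lt_of_le h2 (min_le_right _ _)⟩
      refine ⟨hρIoo, fun hc => hσV ?_⟩
      exact (hcst ρ ⟨lt_of_le_of_lt (le_max_left _ _) h1,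
        lt_of_lt_of_le h2 (min_le_left _ _)⟩ hρIoo).1 hc
    have hsub : Ioo p q ⊆ W ∪ W' := by
      intro σ hσ
      by_cases h : E.x j σ = E.x j p + (σ - p) • V
      · exact Or.inl ⟨hσ, h⟩
      · exact Or.inr ⟨hσ, h⟩
    obtain ⟨z, hz⟩ := isPreconnected_Ioo (a := p) (b := q) W W' hWopen hW'open hsub
      ⟨σ₀, ⟨hσ₀1, hσ₀2⟩, ⟨hσ₀1, hσ₀2⟩, hσ₀V⟩ ⟨τ, hτ, hτ, hτne⟩
    exact hz.2.2.2 hz.2.1.2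
  -- extend to the closed endpoint q by continuity
  have hxq : E.x j q = E.x j p + (q - p) • V := by
    have h1 : Filter.Tendsto (E.x j) (nhdsWithin q (Iio q)) (nhds (E.x j q)) :=
      ((E.cont j).tendsto q).mono_left nhdsWithin_le_nhds
    have h2 : Filter.Tendsto (fun τ => E.x j p + (τ - p) • V) (nhdsWithin q (Iio q))
        (nhds (E.x j p + (q - p) • V)) := by
      apply Filter.Tendsto.mono_left _ nhdsWithin_le_nhds
      exact ((continuous_const.add ((continuous_id.sub continuous_const).smul
        continuous_const)).tendsto q)
    have heq : ∀ᶠ τ in nhdsWithin q (Iio q), E.x j τ = E.x j p + (τ - p) • V := by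
      filter_upwards [Ioo_mem_nhdsLT_of_mem (b := q) (a := p) ⟨hpq, le_refl q⟩] with τ hτ
      exact hxIoo τ hτ
    exact tendsto_nhds_unique (h1.congr' heq) h2
  have hxIcc : ∀ τ ∈ Icc p q, E.x j τ = E.x j p + (τ - p) • V := by
    intro τ hτ
    rcases eq_or_lt_of_le hτ.1 with rfl | h1
    · simp
    rcases eq_or_lt_of_le hτ.2 with rfl | h2
    · exact hxq
    exact hxIoo τ ⟨h1, h2⟩
  refine ⟨hxIcc, hconst, ?_⟩
  -- left velocity at q
  obtain ⟨ε, hε, hL⟩ := E.affineL j q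
  set ρ := max p (q - ε) / 2 + q / 2 with hρdef
  have hρ1 : max p (q - ε) < ρ := by
    have h1 : max p (q - ε) < q := max_lt hpq (by linarith)
    simp only [hρdef]; linarith
  have hρp : p < ρ := lt_of_le_of_lt (le_max_left _ _) hρ1
  have hρε : q - ε < ρ := lt_of_le_of_lt (le_max_right _ _) hρ1
  have hρq : ρ < q := by
    have h1 : max p (q - ε) < q := max_lt hpq (by linarith)
    simp only [hρdef]; linarith
  have h1 : E.x j ρ = E.x j q + (ρ - q) • E.vL j q := hL ρ hρε hρq.le
  have h2 : E.x j ρ = E.x j p + (ρ - p) • V := hxIoo ρ ⟨hρp, hρq⟩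
  have : (ρ - q) • E.vL j q = (ρ - q) • V := by
    have h3 : E.x j ρ - E.x j q = (ρ - q) • V := by rw [h2, hxq]; module
    rw [← h3, h1]; abel
  exact slope_cancel hρq.ne this

end HBX
namespace HBX

variable {n d : ℕ}

lemma conf_ext {z w : Conf n d} (h : ∀ j, z j = w j) : z = w := WithLp.ofLp_injective 2 (funext h)

lemma pieceX (E : HardBallEvolution n d) {p q : ℝ} (hpq : p < q)
    (hfree : ∀ s ∈ Ioo p q, s ∉ E.C) :
    (∀ τ ∈ Icc p q, Xc E τ = Xc E p + (τ - p) • Vr E p) ∧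
    (∀ τ ∈ Ioo p q, Vr E τ = Vr E p) ∧ Vl E q = Vr E p := by
  refine ⟨fun τ hτ => conf_ext fun j => ?_, fun τ hτ => conf_ext fun j => ?_,
    conf_ext fun j => ?_⟩
  · exact (piece E hpq hfree j).1 τ hτ
  · exact (piece E hpq hfree j).2.1 τ hτ
  · exact (piece E hpq hfree j).2.2

/-- every time has a collision-free interval just to its left -/
lemma left_free (E : HardBallEvolution n d) (t : ℝ) :
    ∃ ε > 0, ∀ σ ∈ Ioo (t - ε) t, σ ∉ E.C := by
  by_cases ht : t ∈ E.C
  · obtain ⟨ε, hε, h⟩ := E.discrete_C t ht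
    refine ⟨ε, hε, fun σ hσ hc => ?_⟩
    have := h σ hc (by rw [abs_sub_lt_iff]; constructor <;> linarith [hσ.1, hσ.2])
    linarith [hσ.2, this.ge]
  · have : E.Cᶜ ∈ nhds t := E.closed_C.isOpen_compl.mem_nhds ht
    obtain ⟨ε, hε, h⟩ := Metric.mem_nhds_iff.1 this
    refine ⟨ε, hε, fun σ hσ hc => ?_⟩
    exact h (by rw [Metric.mem_ball, Real.dist_eq, abs_sub_lt_iff]
                constructor <;> linarith [hσ.1, hσ.2]) hc

/-- the left velocities at any time agree with the right velocities slightly earlier -/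
lemma left_vel (E : HardBallEvolution n d) (t : ℝ) :
    ∃ s < t, (∀ σ ∈ Ioo s t, σ ∉ E.C) ∧ (∀ j, E.vL j t = E.vR j s) := by
  obtain ⟨ε, hε, h⟩ := left_free E t
  refine ⟨t - ε, by linarith, h, fun j => (piece E (by linarith) h j).2.2⟩

/-- collision times in a compact interval are finite -/
lemma finiteC (E : HardBallEvolution n d) (a b : ℝ) : (E.C ∩ Icc a b).Finite := by
  by_contra hinf
  rw [← Set.not_infinite, not_not] at hinf
  obtain ⟨z, hzK, hz⟩ := hinf.exists_accPt_of_subset_isCompact isCompact_Icc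
    (inter_subset_right)
  have hzC : z ∈ E.C := by
    have : z ∈ closure (E.C ∩ Icc a b) := by
      rw [mem_closure_iff_clusterPt]
      exact hz.clusterPt
    exact (E.closed_C.closure_subset_iff.2 inter_subset_left) this
  obtain ⟨ε, hε, h⟩ := E.discrete_C z hzC
  rw [accPt_iff_nhds] at hz
  obtain ⟨y, ⟨hy1, hy2⟩, hyne⟩ := hz (Metric.ball z ε) (Metric.ball_mem_nhds z hε)
  exact hyne (h y hy2.1 (by rw [← Real.dist_eq]; exact hy1))

end HBX
namespace HBX

variable {n d : ℕ}

/-- at a collision, `⟨x, v⟩` jumps upward -/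
lemma jumpF (E : HardBallEvolution n d) {t : ℝ} (ht : t ∈ E.C) : fLv E t ≤ fR E t := by
  obtain ⟨j, k, hjk, hdist, _, hneg, hvj, hvk, hoth⟩ := E.collision t ht
  set u := ‖E.x j t - E.x k t‖⁻¹ • (E.x j t - E.x k t) with hu
  clear_value u
  set c : ℝ := inner ℝ (E.vL k t - E.vL j t) u with hc
  clear_value c
  have hcoeff : (inner ℝ (E.vL j t - E.vL k t) u : ℝ) = -c := by
    rw [hc, inner_sub_left, inner_sub_left]; ring
  have hcpos : 0 < c := by rw [hcoeff] at hneg; linarith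
  have hj' : E.vR j t - E.vL j t = c • u := by rw [hvj]; abel
  have hk' : E.vR k t - E.vL k t = -(c • u) := by rw [hvk, hcoeff, neg_smul]; abel
  have hxu : (inner ℝ (E.x j t - E.x k t) u : ℝ) = 2 := by
    rw [hu, real_inner_smul_right, real_inner_self_eq_norm_sq, hdist]; norm_num
  have hdiff : fR E t - fLv E t = 2 * c := by
    have hsum : fR E t - fLv E t
        = ∑ i : Fin n, (inner ℝ (E.x i t) (E.vR i t - E.vL i t) : ℝ) := by
      rw [fR, fLv, inner_conf, inner_conf, ← Finset.sum_sub_distrib]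
      congr 1; funext i
      rw [inner_sub_right]; rfl
    rw [hsum, Finset.sum_eq_add_of_mem j k (Finset.mem_univ j) (Finset.mem_univ k) hjk
      (fun i _ hi => by
        rw [hoth i hi.1 hi.2, sub_self, inner_zero_right])]
    rw [hj', hk', inner_neg_right, real_inner_smul_right, real_inner_smul_right]
    rw [inner_sub_left] at hxu
    ring_nf
    ring_nf at hxu
    nlinarith [hxu]
  linarith

end HBX
namespace HBX

variable {n d : ℕ}

lemma noKinkX (E : HardBallEvolution n d) {t : ℝ} (ht : t ∉ E.C) : Vl E t = Vr E t :=
  conf_ext fun j => (E.noKink j t ht).symm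

/-- collision-free piece: evolution of `f` and `J` -/
lemma piece_fJ (E : HardBallEvolution n d) (hA4 : E.A4) {p q : ℝ} (hpq : p < q)
    (hfree : ∀ s ∈ Ioo p q, s ∉ E.C) :
    fLv E q = fR E p + (q - p) ∧ Jl E q = Jr E p := by
  obtain ⟨hX, _, hVl⟩ := pieceX E hpq hfree
  have hXq : Xc E q = Xc E p + (q - p) • Vr E p := hX q ⟨hpq.le, le_refl q⟩
  have hf : fLv E q = fR E p + (q - p) := by
    rw [fLv, hVl, hXq, inner_add_left, real_inner_smul_left, inner_Vr_self E hA4, fR]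
    ring
  have hrr : rr E q ^ 2 = rr E p ^ 2 + 2 * (q - p) * fR E p + (q - p) ^ 2 := by
    rw [rr, rr, hXq, norm_add_sq_real, real_inner_smul_right, norm_smul, norm_Vr E hA4]
    rw [← fR]
    simp only [mul_pow, sq_abs, Real.norm_eq_abs, mul_one]
    ring
  refine ⟨hf, ?_⟩
  rw [Jl, Jr, hf, hrr]; ring

/-- passing through a (possible) collision from the left values to the right values -/
lemma stepR (E : HardBallEvolution n d) (t : ℝ) :
    fLv E t ≤ fR E t ∧ (0 < fLv E t → Jr E t ≤ Jl E t) := by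
  by_cases ht : t ∈ E.C
  · have h := jumpF E ht
    exact ⟨h, fun hpos => by rw [Jr, Jl]; nlinarith⟩
  · have h : Vl E t = Vr E t := noKinkX E ht
    have heq : fLv E t = fR E t := by rw [fLv, fR, h]
    rw [Jr, Jl, heq]
    exact ⟨le_refl _, fun _ => le_refl _⟩

lemma cone_sq (E : HardBallEvolution n d) (hA4 : E.A4) (t : ℝ) :
    ‖Xc E t - fR E t • Vr E t‖ ^ 2 = Jr E t := by
  rw [norm_sub_sq_real, real_inner_smul_right, norm_smul, Real.norm_eq_abs]
  have h1 : (inner ℝ (Xc E t) (Vr E t) : ℝ) = fR E t := rfl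
  rw [h1, norm_Vr E hA4, Jr, rr]
  rw [mul_pow, sq_abs]
  ring

lemma Jr_nonneg (E : HardBallEvolution n d) (hA4 : E.A4) (t : ℝ) : 0 ≤ Jr E t := by
  rw [← cone_sq E hA4]; positivity

lemma fR_le_rr (E : HardBallEvolution n d) (hA4 : E.A4) (t : ℝ) : fR E t ≤ rr E t := by
  have h := Jr_nonneg E hA4 t
  rw [Jr] at h
  nlinarith [rr_nonneg E t, abs_nonneg (fR E t), sq_abs (fR E t), le_abs_self (fR E t)]

section Phase1

variable (E : HardBallEvolution n d) (hA4 : E.A4) {t₀ : ℝ}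
  (hpos : ∀ t > t₀, 0 < E.xvInner t)

lemma fR_pos {s : ℝ} (hs : t₀ < s) (hpos : ∀ t > t₀, 0 < E.xvInner t) : 0 < fR E s := by
  rw [fR_eq_xvInner]; exact hpos s hs

include hA4 hpos in
lemma phase1L : ∀ m : ℕ, ∀ s t : ℝ, t₀ < s → s < t →
    (E.C ∩ Ioo s t).ncard ≤ m →
    fR E s + (t - s) ≤ fLv E t ∧ Jl E t ≤ Jr E s := by
  intro m
  induction m with
  | zero =>
    intro s t hs hst hcard
    have hfin : (E.C ∩ Ioo s t).Finite := (finiteC E s t).subset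
      (inter_subset_inter_right _ Ioo_subset_Icc_self)
    have hempty : E.C ∩ Ioo s t = ∅ :=
      (Set.ncard_eq_zero hfin).1 (Nat.le_zero.1 hcard)
    have hfree : ∀ σ ∈ Ioo s t, σ ∉ E.C := fun σ hσ hc =>
      (Set.eq_empty_iff_forall_notMem.1 hempty σ) ⟨hc, hσ⟩
    obtain ⟨hf, hJ⟩ := piece_fJ E hA4 hst hfree
    exact ⟨le_of_eq (by linarith), le_of_eq hJ⟩
  | succ m IH =>
    intro s t hs hst hcard
    have hfin : (E.C ∩ Ioo s t).Finite := (finiteC E s t).subset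
      (inter_subset_inter_right _ Ioo_subset_Icc_self)
    by_cases hempty : E.C ∩ Ioo s t = ∅
    · have hfree : ∀ σ ∈ Ioo s t, σ ∉ E.C := fun σ hσ hc =>
        (Set.eq_empty_iff_forall_notMem.1 hempty σ) ⟨hc, hσ⟩
      obtain ⟨hf, hJ⟩ := piece_fJ E hA4 hst hfree
      exact ⟨le_of_eq (by linarith), le_of_eq hJ⟩
    · have hne : hfin.toFinset.Nonempty := by
        rw [Set.Finite.toFinset_nonempty]
        exact Set.nonempty_iff_ne_empty.2 hempty
      set τ := hfin.toFinset.max' hne with hτdef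
      have hτmem : τ ∈ E.C ∩ Ioo s t := by
        have h := hfin.toFinset.max'_mem hne
        rw [Set.Finite.mem_toFinset] at h
        exact h
      have hτmax : ∀ σ ∈ E.C ∩ Ioo s t, σ ≤ τ := fun σ hσ =>
        hfin.toFinset.le_max' σ (by rw [Set.Finite.mem_toFinset]; exact hσ)
      have hsτ : s < τ := hτmem.2.1
      have hτt : τ < t := hτmem.2.2
      have hfree2 : ∀ σ ∈ Ioo τ t, σ ∉ E.C := by
        intro σ hσ hc
        have hmem : σ ∈ E.C ∩ Ioo s t := ⟨hc, lt_trans hsτ hσ.1, hσ.2⟩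
        linarith [hτmax σ hmem, hσ.1]
      have hcard2 : (E.C ∩ Ioo s τ).ncard ≤ m := by
        have hsub : (E.C ∩ Ioo s τ) ⊆ (E.C ∩ Ioo s t) \ {τ} := by
          rintro z ⟨hz1, hz2⟩
          exact ⟨⟨hz1, hz2.1, lt_trans hz2.2 hτt⟩, fun hzτ => by
            rw [Set.mem_singleton_iff] at hzτ
            rw [hzτ] at hz2
            exact lt_irrefl τ hz2.2⟩
        have h1 := Set.ncard_le_ncard hsub hfin.diff
        have h2 : ((E.C ∩ Ioo s t) \ {τ}).ncard = (E.C ∩ Ioo s t).ncard - 1 :=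
          Set.ncard_diff_singleton_of_mem hτmem
        have h3 : 1 ≤ (E.C ∩ Ioo s t).ncard := by
          rw [Nat.one_le_iff_ne_zero]
          intro hc
          exact hempty ((Set.ncard_eq_zero hfin).1 hc)
        omega
      obtain ⟨IH1, IH2⟩ := IH s τ hs hsτ hcard2
      obtain ⟨hstep1, hstep2⟩ := stepR E τ
      have hfLτpos : 0 < fLv E τ := by
        have := fR_pos E hs hpos; linarith
      have hJτ : Jr E τ ≤ Jl E τ := hstep2 hfLτpos
      obtain ⟨hf3, hJ3⟩ := piece_fJ E hA4 hτt hfree2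
      exact ⟨by linarith, by linarith⟩

include hA4 hpos in
lemma phase1L' {s t : ℝ} (hs : t₀ < s) (hst : s < t) :
    fR E s + (t - s) ≤ fLv E t ∧ Jl E t ≤ Jr E s :=
  phase1L E hA4 hpos (E.C ∩ Ioo s t).ncard s t hs hst (le_refl _)

include hA4 hpos in
lemma phase1R {s t : ℝ} (hs : t₀ < s) (hst : s ≤ t) :
    fR E s + (t - s) ≤ fR E t ∧ Jr E t ≤ Jr E s := by
  rcases eq_or_lt_of_le hst with rfl | h
  · simp
  obtain ⟨h1, h2⟩ := phase1L' E hA4 hpos hs h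
  obtain ⟨hstep1, hstep2⟩ := stepR E t
  have hfpos : 0 < fLv E t := by
    have := fR_pos E hs hpos; linarith
  exact ⟨by linarith, by linarith [hstep2 hfpos]⟩

include hA4 hpos in
lemma fR_ge {t : ℝ} (ht : t₀ < t) : t - t₀ ≤ fR E t := by
  have hev : ∀ᶠ s in nhdsWithin t₀ (Ioi t₀), t - s ≤ fR E t := by
    filter_upwards [Ioo_mem_nhdsGT_of_mem ⟨le_refl t₀, ht⟩] with s hs
    have := (phase1R E hA4 hpos hs.1 hs.2.le).1
    linarith [fR_pos E hs.1 hpos]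
  have hlim : Filter.Tendsto (fun s => t - s) (nhdsWithin t₀ (Ioi t₀)) (nhds (t - t₀)) :=
    (tendsto_const_nhds.sub Filter.tendsto_id).mono_left nhdsWithin_le_nhds
  exact le_of_tendsto hlim hev

include hA4 hpos in
lemma fLv_ge {t : ℝ} (ht : t₀ < t) : t - t₀ ≤ fLv E t := by
  have hev : ∀ᶠ s in nhdsWithin t₀ (Ioi t₀), t - s ≤ fLv E t := by
    filter_upwards [Ioo_mem_nhdsGT_of_mem ⟨le_refl t₀, ht⟩] with s hs
    have := (phase1L' E hA4 hpos hs.1 hs.2).1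
    linarith [fR_pos E hs.1 hpos]
  have hlim : Filter.Tendsto (fun s => t - s) (nhdsWithin t₀ (Ioi t₀)) (nhds (t - t₀)) :=
    (tendsto_const_nhds.sub Filter.tendsto_id).mono_left nhdsWithin_le_nhds
  exact le_of_tendsto hlim hev

include hA4 hpos in
lemma Jr_le_r0 {t : ℝ} (ht : t₀ < t) : Jr E t ≤ rr E t₀ ^ 2 := by
  have hev : ∀ᶠ s in nhdsWithin t₀ (Ioi t₀), Jr E t ≤ rr E s ^ 2 := by
    filter_upwards [Ioo_mem_nhdsGT_of_mem ⟨le_refl t₀, ht⟩] with s hs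
    have h1 := (phase1R E hA4 hpos hs.1 hs.2.le).2
    have : Jr E s ≤ rr E s ^ 2 := by rw [Jr]; nlinarith [sq_nonneg (fR E s)]
    linarith
  have hlim : Filter.Tendsto (fun s => rr E s ^ 2) (nhdsWithin t₀ (Ioi t₀))
      (nhds (rr E t₀ ^ 2)) :=
    (((cont_rr E).pow 2).tendsto t₀).mono_left nhdsWithin_le_nhds
  exact ge_of_tendsto hlim hev

include hA4 hpos in
lemma Jl_le_r0 {t : ℝ} (ht : t₀ < t) : Jl E t ≤ rr E t₀ ^ 2 := by
  have hev : ∀ᶠ s in nhdsWithin t₀ (Ioi t₀), Jl E t ≤ rr E s ^ 2 := by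
    filter_upwards [Ioo_mem_nhdsGT_of_mem ⟨le_refl t₀, ht⟩] with s hs
    have h1 := (phase1L' E hA4 hpos hs.1 hs.2).2
    have : Jr E s ≤ rr E s ^ 2 := by rw [Jr]; nlinarith [sq_nonneg (fR E s)]
    linarith
  have hlim : Filter.Tendsto (fun s => rr E s ^ 2) (nhdsWithin t₀ (Ioi t₀))
      (nhds (rr E t₀ ^ 2)) :=
    (((cont_rr E).pow 2).tendsto t₀).mono_left nhdsWithin_le_nhds
  exact ge_of_tendsto hlim hev

end Phase1
end HBX
namespace HBX

variable {n d : ℕ}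

noncomputable def yv (E : HardBallEvolution n d) (t : ℝ) : Conf n d := (fR E t)⁻¹ • Xc E t
noncomputable def yl (E : HardBallEvolution n d) (t : ℝ) : Conf n d := (fLv E t)⁻¹ • Xc E t

/-- drift of `y` along a collision-free piece -/
lemma piece_y (E : HardBallEvolution n d) (hA4 : E.A4) {p q : ℝ} (hpq : p < q)
    (hfree : ∀ s ∈ Ioo p q, s ∉ E.C) (hfp : 0 < fR E p) {R : ℝ} (hR : 0 ≤ R)
    (hJp : Jr E p ≤ R ^ 2) :
    ‖yl E q - yv E p‖ ≤ R * ((fR E p)⁻¹ - (fLv E q)⁻¹) := by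
  obtain ⟨hX, _, _⟩ := pieceX E hpq hfree
  have hXq : Xc E q = Xc E p + (q - p) • Vr E p := hX q ⟨hpq.le, le_refl q⟩
  have hb : fLv E q = fR E p + (q - p) := (piece_fJ E hA4 hpq hfree).1
  have hbpos : 0 < fLv E q := by linarith
  have hbpos' : 0 < fR E p + (q - p) := by linarith
  have hkey : yl E q - yv E p
      = ((q - p) / (fR E p * fLv E q)) • (fR E p • Vr E p - Xc E p) := by
    rw [yl, yv, hXq, hb]
    have ha' : fR E p ≠ 0 := hfp.ne'
    have hb' : fR E p + (q - p) ≠ 0 := hbpos'.ne'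
    match_scalars
    · field_simp
      try ring_nf
      try simp
      try ring
    · field_simp
      try ring_nf
      try simp
      try ring
  have hnorm : ‖fR E p • Vr E p - Xc E p‖ ≤ R := by
    have h1 : ‖fR E p • Vr E p - Xc E p‖ = ‖Xc E p - fR E p • Vr E p‖ := norm_sub_rev _ _
    have h2 := cone_sq E hA4 p
    nlinarith [norm_nonneg (Xc E p - fR E p • Vr E p), norm_nonneg (fR E p • Vr E p - Xc E p)]
  have hc0 : 0 ≤ (q - p) / (fR E p * fLv E q) :=
    div_nonneg (by linarith) (mul_pos hfp hbpos).le
  rw [hkey, norm_smul, Real.norm_eq_abs]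
  have habs : |(q - p) / (fR E p * fLv E q)| = (q - p) / (fR E p * fLv E q) :=
    abs_of_nonneg hc0
  rw [habs]
  have heq : R * ((fR E p)⁻¹ - (fLv E q)⁻¹) = (q - p) / (fR E p * fLv E q) * R := by
    rw [hb]
    have ha' : fR E p ≠ 0 := hfp.ne'
    have hb' : fR E p + (q - p) ≠ 0 := hbpos'.ne'
    field_simp
    ring
  rw [heq]
  exact mul_le_mul_of_nonneg_left hnorm hc0

/-- drift of `y` at a collision -/
lemma jump_y (E : HardBallEvolution n d) {τ : ℝ} (hτC : τ ∈ E.C) {D R : ℝ}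
    (hD0 : 0 < D) (ha : D ≤ fLv E τ) (hRD : R ≤ D) (hR0 : 0 ≤ R)
    (hJl : Jl E τ ≤ R ^ 2) :
    ‖yv E τ - yl E τ‖ ≤ 2 / D ^ 2 * (Jl E τ - Jr E τ) := by
  set a := fLv E τ with hadef
  set b := fR E τ with hbdef
  have hab : a ≤ b := jumpF E hτC
  have ha0 : 0 < a := lt_of_lt_of_le hD0 ha
  have hb0 : 0 < b := lt_of_lt_of_le ha0 hab
  have hrr2 : rr E τ ^ 2 ≤ 2 * a ^ 2 := by
    have : rr E τ ^ 2 = Jl E τ + a ^ 2 := by rw [Jl]; ring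
    nlinarith
  have hrle : rr E τ ≤ 2 * a := by nlinarith [rr_nonneg E τ]
  have hkey : yv E τ - yl E τ = (b⁻¹ - a⁻¹) • Xc E τ := by
    rw [yv, yl, ← sub_smul]
  rw [hkey, norm_smul, Real.norm_eq_abs, ← rr]
  have habs : |b⁻¹ - a⁻¹| = a⁻¹ - b⁻¹ := by
    rw [abs_of_nonpos (by simp; exact (inv_anti₀ ha0 hab))]
    ring
  rw [habs]
  have hJJ : Jl E τ - Jr E τ = b ^ 2 - a ^ 2 := by rw [Jl, Jr]; ring
  rw [hJJ]
  have h1 : a⁻¹ - b⁻¹ = (b - a) / (a * b) := by field_simp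
  rw [h1, div_mul_eq_mul_div, div_le_iff₀ (by positivity)]
  have hDb : D ≤ b := le_trans ha hab
  have hD2b : D ^ 2 ≤ b ^ 2 := by nlinarith
  have hstep : (b - a) * rr E τ * D ^ 2 ≤ 2 * (b ^ 2 - a ^ 2) * (a * b) := by
    have e1 : (b - a) * rr E τ ≤ (b - a) * (2 * a) :=
      mul_le_mul_of_nonneg_left hrle (sub_nonneg.2 hab)
    have e2 : (b - a) * rr E τ * D ^ 2 ≤ (b - a) * (2 * a) * D ^ 2 :=
      mul_le_mul_of_nonneg_right e1 (sq_nonneg D)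
    have e3 : (b - a) * (2 * a) * D ^ 2 ≤ (b - a) * (2 * a) * b ^ 2 :=
      mul_le_mul_of_nonneg_left hD2b
        (mul_nonneg (sub_nonneg.2 hab) (by linarith))
    have e4 : (b - a) * (2 * a) * b ^ 2 ≤ 2 * (b ^ 2 - a ^ 2) * (a * b) := by
      nlinarith [mul_nonneg (mul_nonneg (mul_nonneg ha0.le ha0.le) hb0.le)
        (sub_nonneg.2 hab)]
    linarith
  calc (b - a) * rr E τ = ((b - a) * rr E τ * D ^ 2) / D ^ 2 := by field_simp
    _ ≤ (2 * (b ^ 2 - a ^ 2) * (a * b)) / D ^ 2 := by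
        exact (div_le_div_iff_of_pos_right (by positivity)).2 hstep
    _ = 2 / D ^ 2 * (b ^ 2 - a ^ 2) * (a * b) := by ring

section Phase2

variable (E : HardBallEvolution n d) (hA4 : E.A4) {t₀ D : ℝ}
  (hpos : ∀ t > t₀, 0 < E.xvInner t) (hD0 : 0 < D) (hRD : rr E t₀ ≤ D)

include hA4 hpos hD0 hRD in
/-- passing a piece and then (possibly) a collision at its right end -/
lemma endpoint {p t : ℝ} (hp : t₀ + D ≤ p) (hpt : p < t)
    (hfree : ∀ σ ∈ Ioo p t, σ ∉ E.C) :
    ‖yv E t - yv E p‖ ≤ rr E t₀ * ((fR E p)⁻¹ - (fR E t)⁻¹)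
      + 2 / D ^ 2 * (Jr E p - Jr E t) := by
  set R := rr E t₀ with hRdef
  have hR0 : 0 ≤ R := rr_nonneg E t₀
  have hpt₀ : t₀ < p := by linarith
  have htt₀ : t₀ < t := by linarith
  have hfp : 0 < fR E p := fR_pos E hpt₀ hpos
  have hJp : Jr E p ≤ R ^ 2 := Jr_le_r0 E hA4 hpos hpt₀
  have hpiece := piece_y E hA4 hpt hfree hfp hR0 hJp
  have hJlJr : Jl E t = Jr E p := (piece_fJ E hA4 hpt hfree).2
  have hfLv : fLv E t = fR E p + (t - p) := (piece_fJ E hA4 hpt hfree).1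
  have hfLvD : D ≤ fLv E t := by
    have := fLv_ge E hA4 hpos htt₀; linarith
  have hfLvpos : 0 < fLv E t := by linarith
  by_cases htC : t ∈ E.C
  · have hjump := jump_y E htC hD0 hfLvD hRD hR0 (Jl_le_r0 E hA4 hpos htt₀)
    have htri : ‖yv E t - yv E p‖ ≤ ‖yv E t - yl E t‖ + ‖yl E t - yv E p‖ := by
      have := norm_add_le (yv E t - yl E t) (yl E t - yv E p)
      simpa using this
    have hmono : R * ((fR E p)⁻¹ - (fLv E t)⁻¹) ≤ R * ((fR E p)⁻¹ - (fR E t)⁻¹) := by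
      apply mul_le_mul_of_nonneg_left _ hR0
      have h1 : fLv E t ≤ fR E t := jumpF E htC
      have h2 : (fR E t)⁻¹ ≤ (fLv E t)⁻¹ := inv_anti₀ hfLvpos h1
      linarith
    rw [hJlJr] at hjump
    linarith
  · have hVeq : Vl E t = Vr E t := noKinkX E htC
    have hfeq : fLv E t = fR E t := by rw [fLv, fR, hVeq]
    have hyeq : yl E t = yv E t := by rw [yl, yv, hfeq]
    have hJeq : Jl E t = Jr E t := by rw [Jl, Jr, hfeq]
    rw [hyeq, hfeq] at hpiece
    rw [hJeq] at hJlJr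
    have : 2 / D ^ 2 * (Jr E p - Jr E t) = 0 := by rw [hJlJr]; ring
    linarith

include hA4 hpos hD0 hRD in
lemma phase2 : ∀ m : ℕ, ∀ s t : ℝ, t₀ + D ≤ s → s ≤ t →
    (E.C ∩ Ioo s t).ncard ≤ m →
    ‖yv E t - yv E s‖ ≤ rr E t₀ * ((fR E s)⁻¹ - (fR E t)⁻¹)
      + 2 / D ^ 2 * (Jr E s - Jr E t) := by
  intro m
  induction m with
  | zero =>
    intro s t hs hst hcard
    rcases eq_or_lt_of_le hst with rfl | h
    · simp
    have hfin : (E.C ∩ Ioo s t).Finite := (finiteC E s t).subset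
      (inter_subset_inter_right _ Ioo_subset_Icc_self)
    have hempty : E.C ∩ Ioo s t = ∅ :=
      (Set.ncard_eq_zero hfin).1 (Nat.le_zero.1 hcard)
    exact endpoint E hA4 hpos hD0 hRD hs h (fun σ hσ hc =>
      (Set.eq_empty_iff_forall_notMem.1 hempty σ) ⟨hc, hσ⟩)
  | succ m IH =>
    intro s t hs hst hcard
    rcases eq_or_lt_of_le hst with rfl | h
    · simp
    have hfin : (E.C ∩ Ioo s t).Finite := (finiteC E s t).subset
      (inter_subset_inter_right _ Ioo_subset_Icc_self)
    by_cases hempty : E.C ∩ Ioo s t = ∅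
    · exact endpoint E hA4 hpos hD0 hRD hs h (fun σ hσ hc =>
        (Set.eq_empty_iff_forall_notMem.1 hempty σ) ⟨hc, hσ⟩)
    · have hne : hfin.toFinset.Nonempty := by
        rw [Set.Finite.toFinset_nonempty]
        exact Set.nonempty_iff_ne_empty.2 hempty
      set τ := hfin.toFinset.max' hne with hτdef
      have hτmem : τ ∈ E.C ∩ Ioo s t := by
        have h := hfin.toFinset.max'_mem hne
        rw [Set.Finite.mem_toFinset] at h
        exact h
      have hτmax : ∀ σ ∈ E.C ∩ Ioo s t, σ ≤ τ := fun σ hσ =>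
        hfin.toFinset.le_max' σ (by rw [Set.Finite.mem_toFinset]; exact hσ)
      have hsτ : s < τ := hτmem.2.1
      have hτt : τ < t := hτmem.2.2
      have hfree2 : ∀ σ ∈ Ioo τ t, σ ∉ E.C := by
        intro σ hσ hc
        have hmem : σ ∈ E.C ∩ Ioo s t := ⟨hc, lt_trans hsτ hσ.1, hσ.2⟩
        linarith [hτmax σ hmem, hσ.1]
      have hcard2 : (E.C ∩ Ioo s τ).ncard ≤ m := by
        have hsub : (E.C ∩ Ioo s τ) ⊆ (E.C ∩ Ioo s t) \ {τ} := by
          rintro z ⟨hz1, hz2⟩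
          exact ⟨⟨hz1, hz2.1, lt_trans hz2.2 hτt⟩, fun hzτ => by
            rw [Set.mem_singleton_iff] at hzτ
            rw [hzτ] at hz2
            exact lt_irrefl τ hz2.2⟩
        have h1 := Set.ncard_le_ncard hsub hfin.diff
        have h2 : ((E.C ∩ Ioo s t) \ {τ}).ncard = (E.C ∩ Ioo s t).ncard - 1 :=
          Set.ncard_diff_singleton_of_mem hτmem
        have h3 : 1 ≤ (E.C ∩ Ioo s t).ncard := by
          rw [Nat.one_le_iff_ne_zero]
          intro hc
          exact hempty ((Set.ncard_eq_zero hfin).1 hc)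
        omega
      have hIH := IH s τ hs hsτ.le hcard2
      have hend := endpoint E hA4 hpos hD0 hRD (by linarith : t₀ + D ≤ τ) hτt hfree2
      have htri : ‖yv E t - yv E s‖ ≤ ‖yv E t - yv E τ‖ + ‖yv E τ - yv E s‖ := by
        have := norm_add_le (yv E t - yv E τ) (yv E τ - yv E s)
        simpa using this
      linarith

include hA4 hpos hD0 hRD in
/-- total drift bound after time `t₀ + D` -/
lemma drift {t : ℝ} (hT : t₀ + D ≤ t) :
    ‖yv E t - yv E (t₀ + D)‖ ≤ rr E t₀ / D + 2 * rr E t₀ ^ 2 / D ^ 2 := by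
  set s := t₀ + D with hsdef
  have h := phase2 E hA4 hpos hD0 hRD (E.C ∩ Ioo s t).ncard s t (le_refl s) hT (le_refl _)
  have hst₀ : t₀ < s := by linarith
  have hfs : D ≤ fR E s := by
    have := fR_ge E hA4 hpos hst₀; linarith
  have hfspos : 0 < fR E s := lt_of_lt_of_le hD0 hfs
  have h1 : (fR E s)⁻¹ ≤ D⁻¹ := inv_anti₀ hD0 hfs
  have h2 : 0 ≤ (fR E t)⁻¹ := by
    have := fR_pos E (by linarith : t₀ < t) hpos
    positivity
  have h3 : Jr E s ≤ rr E t₀ ^ 2 := Jr_le_r0 E hA4 hpos hst₀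
  have h4 : 0 ≤ Jr E t := Jr_nonneg E hA4 t
  have hR0 : 0 ≤ rr E t₀ := rr_nonneg E t₀
  calc ‖yv E t - yv E s‖ ≤ rr E t₀ * ((fR E s)⁻¹ - (fR E t)⁻¹)
        + 2 / D ^ 2 * (Jr E s - Jr E t) := h
    _ ≤ rr E t₀ * D⁻¹ + 2 / D ^ 2 * rr E t₀ ^ 2 := by
        have := mul_le_mul_of_nonneg_left (by linarith : (fR E s)⁻¹ - (fR E t)⁻¹ ≤ D⁻¹) hR0
        have h5 : (0:ℝ) < D ^ 2 := by positivity
        have := mul_le_mul_of_nonneg_left (by linarith : Jr E s - Jr E t ≤ rr E t₀ ^ 2)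
          (by positivity : (0:ℝ) ≤ 2 / D ^ 2)
        linarith
    _ = rr E t₀ / D + 2 * rr E t₀ ^ 2 / D ^ 2 := by ring

end Phase2
end HBX
namespace HBX

variable {n d : ℕ}

lemma rr_ge_one (E : HardBallEvolution n d) (hn : 3 ≤ n) (t₀ : ℝ) :
    1 ≤ rr E t₀ ∧ 2 ≤ rr E t₀ ^ 2 := by
  have hn0 : 0 < n := by omega
  have hn1 : 1 < n := by omega
  have hne : (⟨0, hn0⟩ : Fin n) ≠ ⟨1, hn1⟩ := by
    intro h
    have := congrArg Fin.val h
    simp at this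
  set j0 : Fin n := ⟨0, hn0⟩
  set k0 : Fin n := ⟨1, hn1⟩
  have h2 : (2:ℝ) ≤ ‖E.x j0 t₀ - E.x k0 t₀‖ := E.noOverlap j0 k0 hne t₀
  have h3 : ‖E.x j0 t₀ - E.x k0 t₀‖ ≤ ‖E.x j0 t₀‖ + ‖E.x k0 t₀‖ := norm_sub_le _ _
  have h4 : ‖E.x j0 t₀‖ ^ 2 + ‖E.x k0 t₀‖ ^ 2 ≤ rr E t₀ ^ 2 := by
    rw [rr_sq]
    have := Finset.sum_le_sum_of_subset_of_nonneg
      (Finset.subset_univ {j0, k0}) (f := fun i => ‖E.x i t₀‖ ^ 2)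
      (fun i _ _ => by positivity)
    rwa [Finset.sum_pair hne] at this
  have hsq : 2 ≤ rr E t₀ ^ 2 := by
    nlinarith [sq_nonneg (‖E.x j0 t₀‖ - ‖E.x k0 t₀‖),
      sq_nonneg (‖E.x j0 t₀‖ + ‖E.x k0 t₀‖ - 2),
      norm_nonneg (E.x j0 t₀), norm_nonneg (E.x k0 t₀)]
  exact ⟨by nlinarith [rr_nonneg E t₀], hsq⟩

/-- pigeonhole clustering of `n` directions with unit total mass and zero mean -/
lemma cluster (hn : 3 ≤ n) (Y : Fin n → EuclideanSpace ℝ (Fin d))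
    (hsum : 1 ≤ ∑ j, ‖Y j‖ ^ 2) (hc : ∑ j, Y j = 0) :
    ∃ S T : Set (Fin n), S.Nonempty ∧ T.Nonempty ∧ S ∪ T = Set.univ ∧ S ∩ T = ∅ ∧
      ∀ j ∈ S, ∀ k ∈ T, 1 / (20 * (n:ℝ) ^ 3) < ‖Y k - Y j‖ := by
  have hn0 : 0 < n := by omega
  have hnR : (3:ℝ) ≤ (n:ℝ) := by exact_mod_cast hn
  have hnR0 : (0:ℝ) < (n:ℝ) := by linarith
  have huniv : (Finset.univ : Finset (Fin n)).Nonempty := ⟨⟨0, hn0⟩, Finset.mem_univ _⟩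
  obtain ⟨jst, -, hjst⟩ := Finset.exists_le_of_sum_le (f := fun _ : Fin n => 1 / (n:ℝ))
    (g := fun j => ‖Y j‖ ^ 2) huniv (by
      rw [Finset.sum_const, Finset.card_univ, Fintype.card_fin, nsmul_eq_mul,
        mul_one_div, div_self hnR0.ne']
      exact hsum)
  have hjst' : 1 / (n:ℝ) ≤ ‖Y jst‖ ^ 2 := hjst
  have hm0 : (0:ℝ) ≤ ‖Y jst‖ := norm_nonneg _
  have hmlow : 1 / (20 * (n:ℝ) ^ 2) ≤ ‖Y jst‖ := by
    by_contra hcon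
    push_neg at hcon
    have hq0 : (0:ℝ) < 1 / (20 * (n:ℝ) ^ 2) := by positivity
    have h1 : ‖Y jst‖ ^ 2 < (1 / (20 * (n:ℝ) ^ 2)) ^ 2 := by nlinarith
    have h2 : (1 / (20 * (n:ℝ) ^ 2)) ^ 2 = 1 / (400 * (n:ℝ) ^ 4) := by
      rw [div_pow, one_pow]
      congr 1
      ring
    rw [h2] at h1
    have h3 : 1 / (n:ℝ) < 1 / (400 * (n:ℝ) ^ 4) := lt_of_le_of_lt hjst' h1
    rw [div_lt_div_iff₀ hnR0 (by positivity)] at h3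
    nlinarith [sq_nonneg ((n:ℝ) - 1), sq_nonneg ((n:ℝ) + 1), sq_nonneg ((n:ℝ)^2 - 1)]
  obtain ⟨kst, -, hkst⟩ := Finset.exists_le_of_sum_le (f := fun _ : Fin n => ‖Y jst‖)
    (g := fun k => ‖Y jst - Y k‖) huniv (by
      have h1 : ∑ k, (Y jst - Y k) = (n:ℝ) • Y jst := by
        rw [Finset.sum_sub_distrib, hc, sub_zero, Finset.sum_const, Finset.card_univ,
          Fintype.card_fin]
        exact (Nat.cast_smul_eq_nsmul ℝ n (Y jst)).symm
      have h2 : ‖∑ k, (Y jst - Y k)‖ ≤ ∑ k, ‖Y jst - Y k‖ := norm_sum_le _ _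
      rw [h1, norm_smul, Real.norm_eq_abs, abs_of_pos hnR0] at h2
      rw [Finset.sum_const, Finset.card_univ, Fintype.card_fin, nsmul_eq_mul]
      exact h2)
  have hkst' : ‖Y jst‖ ≤ ‖Y kst - Y jst‖ := by rw [norm_sub_rev]; exact hkst
  obtain ⟨kmx, -, hkmx⟩ := Finset.exists_max_image Finset.univ
    (fun k => ‖Y k - Y jst‖) huniv
  have hDmk : ∀ k, ‖Y k - Y jst‖ ≤ ‖Y kmx - Y jst‖ := fun k => hkmx k (Finset.mem_univ k)
  obtain ⟨Dm, hDm⟩ : ∃ Dm : ℝ, Dm = ‖Y kmx - Y jst‖ := ⟨_, rfl⟩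
  have hDmm : 1 / (20 * (n:ℝ) ^ 2) ≤ Dm := by
    rw [hDm]; exact le_trans hmlow (le_trans hkst' (hDmk kst))
  have hDm0 : 0 < Dm := lt_of_lt_of_le (by positivity) hDmm
  obtain ⟨δ, hδ⟩ : ∃ δ : ℝ, δ = Dm / n := ⟨_, rfl⟩
  have hδ0 : 0 < δ := by rw [hδ]; positivity
  have hnδ : (n:ℝ) * δ = Dm := by rw [hδ]; field_simp
  have hδlow : 1 / (20 * (n:ℝ) ^ 3) ≤ δ := by
    have he : 1 / (20 * (n:ℝ) ^ 3) * (n:ℝ) = 1 / (20 * (n:ℝ) ^ 2) := by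
      field_simp
    rw [hδ, le_div_iff₀ hnR0, he]
    exact hDmm
  -- pigeonhole: a gap of width δ among the distances
  obtain ⟨g, hg⟩ : ∃ g : Fin n → ℕ, g = fun k => ⌈‖Y k - Y jst‖ / δ⌉₊ := ⟨_, rfl⟩
  have hgle : ∀ k, g k ≤ n := by
    intro k
    rw [hg]
    apply Nat.ceil_le.2
    rw [div_le_iff₀ hδ0, hnδ, hDm]
    exact hDmk k
  have h0mem : 0 ∈ Finset.image g Finset.univ := by
    rw [Finset.mem_image]
    refine ⟨jst, Finset.mem_univ _, ?_⟩
    rw [hg]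
    simp
  have hcard : ((Finset.image g Finset.univ).erase 0).card ≤ n - 1 := by
    have h1 : (Finset.image g Finset.univ).card ≤ n := le_trans Finset.card_image_le
      (by rw [Finset.card_univ, Fintype.card_fin])
    have h2 := Finset.card_erase_of_mem h0mem
    omega
  have hnotsub : ¬ (Finset.Icc 1 n ⊆ (Finset.image g Finset.univ).erase 0) := by
    intro hsub
    have := Finset.card_le_card hsub
    rw [Nat.card_Icc] at this
    omega
  obtain ⟨i₀, hi₀Icc, hi₀not⟩ := Finset.not_subset.1 hnotsub
  rw [Finset.mem_Icc] at hi₀Icc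
  have hi₀0 : i₀ ≠ 0 := by omega
  have hgne : ∀ k, g k ≠ i₀ := by
    intro k hck
    exact hi₀not (Finset.mem_erase.2 ⟨hi₀0,
      Finset.mem_image.2 ⟨k, Finset.mem_univ _, hck⟩⟩)
  have hi₀n : i₀ ≠ n := by
    intro hceq
    apply hgne kmx
    rw [hg, hceq]
    have hdm : ‖Y kmx - Y jst‖ / δ = (n:ℝ) := by
      rw [← hDm, eq_comm, eq_div_iff hδ0.ne', ← hnδ]
    simp only [hdm]
    exact Nat.ceil_natCast n
  have hi₀R : (1:ℝ) ≤ (i₀:ℝ) := by exact_mod_cast hi₀Icc.1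
  have hi₀Rn : (i₀:ℝ) < (n:ℝ) := by exact_mod_cast lt_of_le_of_ne hi₀Icc.2 hi₀n
  refine ⟨{k : Fin n | ‖Y k - Y jst‖ ≤ ((i₀:ℝ) - 1) * δ},
    {k : Fin n | (i₀:ℝ) * δ < ‖Y k - Y jst‖},
    ⟨jst, by simp only [Set.mem_setOf_eq, sub_self, norm_zero]
             exact mul_nonneg (by linarith [hi₀R]) hδ0.le⟩,
    ⟨kmx, by simp only [Set.mem_setOf_eq, ← hDm, ← hnδ]
             exact mul_lt_mul_of_pos_right hi₀Rn hδ0⟩, ?_, ?_, ?_⟩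
  · rw [Set.eq_univ_iff_forall]
    intro k
    rw [Set.mem_union, Set.mem_setOf_eq, Set.mem_setOf_eq]
    by_contra hcon
    push_neg at hcon
    obtain ⟨h1, h2⟩ := hcon
    apply hgne k
    rw [hg]
    rw [Nat.ceil_eq_iff hi₀0]
    refine ⟨?_, ?_⟩
    · rw [Nat.cast_sub hi₀Icc.1, Nat.cast_one, lt_div_iff₀ hδ0]
      linarith
    · rw [div_le_iff₀ hδ0]
      linarith
  · rw [Set.eq_empty_iff_forall_notMem]
    rintro k ⟨h1, h2⟩
    rw [Set.mem_setOf_eq] at h1 h2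
    nlinarith
  · intro j hj k hk
    rw [Set.mem_setOf_eq] at hj hk
    have h1 : ‖Y k - Y jst‖ - ‖Y j - Y jst‖ ≤ ‖(Y k - Y jst) - (Y j - Y jst)‖ :=
      norm_sub_norm_le _ _
    rw [sub_sub_sub_cancel_right] at h1
    have h2 : δ < ‖Y k - Y jst‖ - ‖Y j - Y jst‖ := by nlinarith
    linarith [hδlow]

end HBX
namespace HBX

variable {n d : ℕ}

lemma frac_bound : ∀ x : ℝ, 27 ≤ x → 1 / (100 * x) + 2 / (100 * x) ^ 2 ≤ 3 / (200 * x) := by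
  intro x hx
  have hx0 : (0:ℝ) < x := by linarith
  rw [div_add_div _ _ (by positivity) (by positivity),
    div_le_div_iff₀ (by positivity) (by positivity)]
  nlinarith [sq_nonneg x, hx0]

/-- The core splitting lemma (forward direction). -/
lemma core (E : HardBallEvolution n d) (hn : 3 ≤ n) (hA3 : E.A3) (hA4 : E.A4) (t₀ : ℝ)
    (hpos : ∀ t > t₀, 0 < E.xvInner t) :
    ∃ S T : Set (Fin n), S.Nonempty ∧ T.Nonempty ∧ S ∪ T = Set.univ ∧ S ∩ T = ∅ ∧
      ∀ t ∈ E.C, t₀ + 100 * (n : ℝ) ^ 3 * E.xnorm t₀ ≤ t →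
        ∀ j ∈ S, ∀ k ∈ T, ¬ E.involves t j k := by
  have hn0 : 0 < n := by omega
  have hnR : (3:ℝ) ≤ (n:ℝ) := by exact_mod_cast hn
  have hnR0 : (0:ℝ) < (n:ℝ) := by linarith
  have hn27 : (27:ℝ) ≤ (n:ℝ) ^ 3 := by
    have := pow_le_pow_left₀ (by norm_num : (0:ℝ) ≤ 3) hnR 3
    norm_num at this
    exact this
  obtain ⟨hr1, hr2⟩ := rr_ge_one E hn t₀
  have hr0 : (0:ℝ) < rr E t₀ := by linarith
  obtain ⟨D, hD⟩ : ∃ D : ℝ, D = 100 * (n:ℝ) ^ 3 * rr E t₀ := ⟨_, rfl⟩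
  have hD0 : 0 < D := by
    rw [hD]; exact mul_pos (by positivity) hr0
  have hDge : 100 * (n:ℝ) ^ 3 ≤ D := by
    rw [hD]
    nlinarith [mul_le_mul_of_nonneg_left hr1 (by positivity : (0:ℝ) ≤ 100 * (n:ℝ)^3)]
  have hRD : rr E t₀ ≤ D := by
    rw [hD]
    nlinarith [mul_le_mul_of_nonneg_right
      (by nlinarith : (1:ℝ) ≤ 100 * (n:ℝ) ^ 3) (by linarith : (0:ℝ) ≤ rr E t₀)]
  obtain ⟨β, hβ⟩ : ∃ β : ℝ, β = 1 / (100 * (n:ℝ) ^ 3) := ⟨_, rfl⟩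
  have hβ0 : 0 < β := by rw [hβ]; positivity
  obtain ⟨Tz, hTz⟩ : ∃ Tz : ℝ, Tz = t₀ + D := ⟨_, rfl⟩
  have hTzt₀ : t₀ < Tz := by rw [hTz]; linarith
  -- the drift bound
  have hdrift : ∀ t : ℝ, Tz ≤ t → ‖yv E t - yv E Tz‖ ≤ 3 / 2 * β := by
    intro t ht
    rw [hTz] at ht ⊢
    have h := drift E hA4 hpos hD0 hRD ht
    have e1 : rr E t₀ / D = 1 / (100 * (n:ℝ) ^ 3) := by
      rw [hD, eq_div_iff (by positivity)]
      field_simp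
    have e2 : 2 * rr E t₀ ^ 2 / D ^ 2 = 2 / (100 * (n:ℝ) ^ 3) ^ 2 := by
      rw [hD, eq_div_iff (by positivity)]
      field_simp
    have e3 := frac_bound ((n:ℝ) ^ 3) hn27
    have e4 : 3 / (200 * (n:ℝ) ^ 3) = 3 / 2 * β := by
      rw [hβ]; field_simp; ring
    rw [e1, e2] at h
    have : 1 / (100 * ((n:ℝ) ^ 3)) + 2 / (100 * ((n:ℝ) ^ 3)) ^ 2 ≤ 3 / 2 * β := by
      rw [← e4]; exact e3
    calc ‖yv E t - yv E (t₀ + D)‖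
        ≤ 1 / (100 * (n:ℝ) ^ 3) + 2 / (100 * (n:ℝ) ^ 3) ^ 2 := h
      _ ≤ 3 / 2 * β := by
          have e5 : 100 * ((n:ℝ) ^ 3) = 100 * (n:ℝ) ^ 3 := rfl
          rw [← e5]
          exact this
  -- facts about the configuration at time Tz
  have hfTz : D ≤ fR E Tz := by
    have := fR_ge E hA4 hpos hTzt₀; rw [hTz] at this ⊢; linarith
  have hfTzpos : 0 < fR E Tz := lt_of_lt_of_le hD0 hfTz
  have hYsum : 1 ≤ ∑ j, ‖yv E Tz j‖ ^ 2 := by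
    have h1 : ∑ j, ‖yv E Tz j‖ ^ 2 = ‖yv E Tz‖ ^ 2 := (norm_conf_sq _).symm
    have h2 : ‖yv E Tz‖ = (fR E Tz)⁻¹ * rr E Tz := by
      rw [yv, norm_smul, Real.norm_eq_abs, abs_of_pos (by positivity), rr]
    have h3 : fR E Tz ≤ rr E Tz := fR_le_rr E hA4 Tz
    have h4 : (1:ℝ) ≤ (fR E Tz)⁻¹ * rr E Tz := by
      rw [inv_mul_eq_div, le_div_iff₀ hfTzpos]; linarith
    rw [h1, h2]
    nlinarith
  have hYc : ∑ j, yv E Tz j = 0 := by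
    show ∑ j, (fR E Tz)⁻¹ • E.x j Tz = 0
    rw [← Finset.smul_sum, hA3.1 Tz, smul_zero]
  obtain ⟨S, T, hSne, hTne, hST, hSTdisj, hgap⟩ :=
    cluster hn (fun j => yv E Tz j) hYsum hYc
  refine ⟨S, T, hSne, hTne, hST, hSTdisj, ?_⟩
  intro t htC hTt j hj k hk hinv
  obtain ⟨_, hjk, hd2⟩ := hinv
  have hTt' : Tz ≤ t := by
    rw [hTz, hD, ← xnorm_eq_rr]; exact hTt
  have htt₀ : t₀ < t := by linarith
  have hft : D ≤ fR E t := by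
    have h1 := fR_ge E hA4 hpos htt₀
    rw [hTz] at hTt'
    linarith
  have hftpos : 0 < fR E t := lt_of_lt_of_le hD0 hft
  -- separation of the two directions at the collision
  have hsep : ‖yv E t j - yv E t k‖ ≤ 2 * β := by
    have h1 : yv E t j - yv E t k = (fR E t)⁻¹ • (E.x j t - E.x k t) := by
      show (fR E t)⁻¹ • E.x j t - (fR E t)⁻¹ • E.x k t = _
      rw [smul_sub]
    rw [h1, norm_smul, Real.norm_eq_abs, abs_of_pos (by positivity), hd2]
    have h2 : 100 * (n:ℝ) ^ 3 ≤ fR E t := le_trans hDge hft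
    have h3 : (fR E t)⁻¹ ≤ 1 / (100 * (n:ℝ) ^ 3) := by
      rw [inv_eq_one_div]
      gcongr
    rw [hβ]
    nlinarith
  -- drift of the two directions
  have hdj : ‖yv E t j - yv E Tz j‖ ≤ 3 / 2 * β := by
    have h1 := coord_norm_le (yv E t - yv E Tz) j
    exact le_trans h1 (hdrift t hTt')
  have hdk : ‖yv E t k - yv E Tz k‖ ≤ 3 / 2 * β := by
    have h1 := coord_norm_le (yv E t - yv E Tz) k
    exact le_trans h1 (hdrift t hTt')
  -- the gap at time Tz
  have hg := hgap j hj k hk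
  have hg5 : 5 * β < ‖yv E Tz k - yv E Tz j‖ := by
    have e : 1 / (20 * (n:ℝ) ^ 3) = 5 * β := by rw [hβ]; field_simp; ring
    rw [← e]
    exact hg
  -- contradiction via triangle inequality
  have t1 := dist_triangle4 (yv E Tz k) (yv E t k) (yv E t j) (yv E Tz j)
  simp only [dist_eq_norm] at t1
  have e1 : ‖yv E Tz k - yv E t k‖ = ‖yv E t k - yv E Tz k‖ := norm_sub_rev _ _
  have e2 : ‖yv E t k - yv E t j‖ = ‖yv E t j - yv E t k‖ := norm_sub_rev _ _
  rw [e1, e2] at t1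
  linarith

end HBX
namespace HBX

variable {n d : ℕ}

lemma unit_u {x y : EuclideanSpace ℝ (Fin d)} (h : ‖x - y‖ = 2) :
    (inner ℝ (‖x - y‖⁻¹ • (x - y)) (‖x - y‖⁻¹ • (x - y)) : ℝ) = 1 := by
  rw [real_inner_smul_left, real_inner_smul_right, real_inner_self_eq_norm_sq, h]
  norm_num

/-- the time-reversed evolution -/
noncomputable def reverse (E : HardBallEvolution n d) : HardBallEvolution n d where
  x j t := E.x j (-t)
  vL j t := -E.vR j (-t)
  vR j t := -E.vL j (-t)
  C := {t : ℝ | -t ∈ E.C}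
  closed_C := E.closed_C.preimage continuous_neg
  discrete_C := by
    intro t ht
    obtain ⟨ε, hε, h⟩ := E.discrete_C (-t) ht
    refine ⟨ε, hε, fun s hs habs => ?_⟩
    have h2 : |(-s) - (-t)| < ε := by
      rw [show (-s) - (-t) = -(s - t) by ring, abs_neg]; exact habs
    have := h (-s) hs h2
    linarith [neg_inj.1 this]
  cont j := (E.cont j).comp continuous_neg
  noOverlap j k hjk t := E.noOverlap j k hjk (-t)
  affineR j t := by
    obtain ⟨ε, hε, hL⟩ := E.affineL j (-t)
    refine ⟨ε, hε, fun s hts hst => ?_⟩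
    show E.x j (-s) = E.x j (-t) + (s - t) • -E.vL j (-t)
    rw [hL (-s) (by linarith) (by linarith)]
    module
  affineL j t := by
    obtain ⟨ε, hε, hR⟩ := E.affineR j (-t)
    refine ⟨ε, hε, fun s hts hst => ?_⟩
    show E.x j (-s) = E.x j (-t) + (s - t) • -E.vR j (-t)
    rw [hR (-s) (by linarith) (by linarith)]
    module
  noKink j t ht := by
    show -E.vL j (-t) = -E.vR j (-t)
    rw [E.noKink j (-t) ht]
  collision := by
    intro t ht
    obtain ⟨j, k, hjk, hdist, huniq, hneg, hvj, hvk, hoth⟩ := E.collision (-t) ht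
    refine ⟨j, k, hjk, hdist, huniq, ?_, ?_, ?_, ?_⟩
    · show (inner ℝ (-E.vR j (-t) - -E.vR k (-t))
          (‖E.x j (-t) - E.x k (-t)‖⁻¹ • (E.x j (-t) - E.x k (-t))) : ℝ) < 0
      set u := ‖E.x j (-t) - E.x k (-t)‖⁻¹ • (E.x j (-t) - E.x k (-t)) with hu
      have huu : (inner ℝ u u : ℝ) = 1 := by rw [hu]; exact unit_u hdist
      clear_value u
      have h1 : (inner ℝ (-E.vR j (-t) - -E.vR k (-t)) u : ℝ)
          = (inner ℝ (E.vL j (-t) - E.vL k (-t)) u : ℝ) := by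
        rw [show -E.vR j (-t) - -E.vR k (-t) = E.vR k (-t) - E.vR j (-t) by module,
          hvj, hvk]
        simp only [inner_sub_left, inner_add_left, real_inner_smul_left, huu]
        ring
      rw [h1]
      exact hneg
    · show -E.vL j (-t) = -E.vR j (-t)
        + (inner ℝ (-E.vR k (-t) - -E.vR j (-t))
            (‖E.x j (-t) - E.x k (-t)‖⁻¹ • (E.x j (-t) - E.x k (-t))) : ℝ)
          • (‖E.x j (-t) - E.x k (-t)‖⁻¹ • (E.x j (-t) - E.x k (-t)))
      set u := ‖E.x j (-t) - E.x k (-t)‖⁻¹ • (E.x j (-t) - E.x k (-t)) with hu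
      have huu : (inner ℝ u u : ℝ) = 1 := by rw [hu]; exact unit_u hdist
      clear_value u
      have hco : (inner ℝ (-E.vR k (-t) - -E.vR j (-t)) u : ℝ)
          = (inner ℝ (E.vL k (-t) - E.vL j (-t)) u : ℝ) := by
        rw [show -E.vR k (-t) - -E.vR j (-t) = E.vR j (-t) - E.vR k (-t) by module,
          hvj, hvk]
        simp only [inner_sub_left, inner_add_left, real_inner_smul_left, huu]
        ring
      rw [hco, hvj]
      module
    · show -E.vL k (-t) = -E.vR k (-t)
        + (inner ℝ (-E.vR j (-t) - -E.vR k (-t))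
            (‖E.x j (-t) - E.x k (-t)‖⁻¹ • (E.x j (-t) - E.x k (-t))) : ℝ)
          • (‖E.x j (-t) - E.x k (-t)‖⁻¹ • (E.x j (-t) - E.x k (-t)))
      set u := ‖E.x j (-t) - E.x k (-t)‖⁻¹ • (E.x j (-t) - E.x k (-t)) with hu
      have huu : (inner ℝ u u : ℝ) = 1 := by rw [hu]; exact unit_u hdist
      clear_value u
      have hco : (inner ℝ (-E.vR j (-t) - -E.vR k (-t)) u : ℝ)
          = (inner ℝ (E.vL j (-t) - E.vL k (-t)) u : ℝ) := by
        rw [show -E.vR j (-t) - -E.vR k (-t) = E.vR k (-t) - E.vR j (-t) by module,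
          hvj, hvk]
        simp only [inner_sub_left, inner_add_left, real_inner_smul_left, huu]
        ring
      rw [hco, hvk]
      module
    · intro i hij hik
      show -E.vL i (-t) = -E.vR i (-t)
      rw [hoth i hij hik]

lemma sum_vL (E : HardBallEvolution n d) (hA3 : E.A3) (t : ℝ) : ∑ j, E.vL j t = 0 := by
  obtain ⟨s, _, _, hvl⟩ := left_vel E t
  calc ∑ j, E.vL j t = ∑ j, E.vR j s := Finset.sum_congr rfl fun j _ => hvl j
    _ = 0 := hA3.2 s

lemma sum_vL_sq (E : HardBallEvolution n d) (hA4 : E.A4) (t : ℝ) :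
    ∑ j, ‖E.vL j t‖ ^ 2 = 1 := by
  obtain ⟨s, _, _, hvl⟩ := left_vel E t
  calc ∑ j, ‖E.vL j t‖ ^ 2 = ∑ j, ‖E.vR j s‖ ^ 2 :=
      Finset.sum_congr rfl fun j _ => by rw [hvl j]
    _ = 1 := hA4 s

lemma reverse_A3 (E : HardBallEvolution n d) (hA3 : E.A3) : (reverse E).A3 := by
  constructor
  · intro t
    exact hA3.1 (-t)
  · intro t
    show ∑ j, -E.vL j (-t) = 0
    rw [Finset.sum_neg_distrib, sum_vL E hA3 (-t), neg_zero]

lemma reverse_A4 (E : HardBallEvolution n d) (hA4 : E.A4) : (reverse E).A4 := by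
  intro t
  show ∑ j, ‖-E.vL j (-t)‖ ^ 2 = 1
  calc ∑ j, ‖-E.vL j (-t)‖ ^ 2 = ∑ j, ‖E.vL j (-t)‖ ^ 2 :=
      Finset.sum_congr rfl fun j _ => by rw [norm_neg]
    _ = 1 := sum_vL_sq E hA4 (-t)

lemma fLv_sum (E : HardBallEvolution n d) (t : ℝ) :
    fLv E t = ∑ j, (inner ℝ (E.x j t) (E.vL j t) : ℝ) := by
  rw [fLv, inner_conf]; rfl

lemma reverse_xvInner (E : HardBallEvolution n d) (u : ℝ) :
    (reverse E).xvInner u = -(fLv E (-u)) := by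
  show (∑ j, (inner ℝ (E.x j (-u)) (-E.vL j (-u)) : ℝ)) = _
  rw [fLv_sum, ← Finset.sum_neg_distrib]
  exact Finset.sum_congr rfl fun j _ => inner_neg_right _ _

lemma fLv_neg_of_lt (E : HardBallEvolution n d) {t₀ s : ℝ}
    (ht₀neg : ∀ t < t₀, E.xvInner t < 0) (hs : s < t₀) : fLv E s < 0 :=
  lt_of_le_of_lt (stepR E s).1 (by rw [fR_eq_xvInner]; exact ht₀neg s hs)

lemma reverse_pos (E : HardBallEvolution n d) {t₀ : ℝ}
    (ht₀neg : ∀ t < t₀, E.xvInner t < 0) :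
    ∀ u > -t₀, 0 < (reverse E).xvInner u := by
  intro u hu
  rw [reverse_xvInner]
  have : fLv E (-u) < 0 := fLv_neg_of_lt E ht₀neg (by linarith)
  linarith

lemma reverse_xnorm (E : HardBallEvolution n d) (t : ℝ) :
    (reverse E).xnorm t = E.xnorm (-t) := rfl

end HBX


/-- **Theorem 5.1 of [BuD18b].** Under (A3) and (A4), with `t₀` the unique time
at which `⟨x(t), v(t+)⟩` changes sign, the family of `n` balls splits into two
non-empty non-interacting subfamilies on `[t₀ + 100 n³ |x(t₀)|, ∞)`, and
similarly on `(-∞, t₀ − 100 n³ |x(t₀)|]`. -/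
theorem splitting_after_t0 (n d : ℕ) (hn : 3 ≤ n) (hd : 2 ≤ d)
    (E : HardBallEvolution n d) (hA3 : E.A3) (hA4 : E.A4) (t₀ : ℝ)
    (ht₀neg : ∀ t < t₀, E.xvInner t < 0) (ht₀pos : ∀ t > t₀, 0 < E.xvInner t) :
    (∃ S T : Set (Fin n), S.Nonempty ∧ T.Nonempty ∧ S ∪ T = Set.univ ∧ S ∩ T = ∅ ∧
      ∀ t ∈ E.C, t₀ + 100 * (n : ℝ) ^ 3 * E.xnorm t₀ ≤ t →
        ∀ j ∈ S, ∀ k ∈ T, ¬ E.involves t j k) ∧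
    (∃ S' T' : Set (Fin n), S'.Nonempty ∧ T'.Nonempty ∧ S' ∪ T' = Set.univ ∧ S' ∩ T' = ∅ ∧
      ∀ t ∈ E.C, t ≤ t₀ - 100 * (n : ℝ) ^ 3 * E.xnorm t₀ →
        ∀ j ∈ S', ∀ k ∈ T', ¬ E.involves t j k) := by
  constructor
  · exact HBX.core E hn hA3 hA4 t₀ ht₀pos
  · obtain ⟨S', T', h1, h2, h3, h4, h5⟩ :=
      HBX.core (HBX.reverse E) hn (HBX.reverse_A3 E hA3) (HBX.reverse_A4 E hA4) (-t₀)
        (HBX.reverse_pos E ht₀neg)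
    refine ⟨S', T', h1, h2, h3, h4, ?_⟩
    intro t htC hle j hj k hk hinv
    have hxn : (HBX.reverse E).xnorm (-t₀) = E.xnorm t₀ := by
      rw [HBX.reverse_xnorm, neg_neg]
    have htC' : -t ∈ (HBX.reverse E).C := by
      show -(-t) ∈ E.C
      rw [neg_neg]
      exact htC
    refine h5 (-t) htC' (by rw [hxn]; linarith) j hj k hk ?_
    obtain ⟨h6, h7, h8⟩ := hinv
    refine ⟨htC', h7, ?_⟩
    show ‖E.x j (-(-t)) - E.x k (-(-t))‖ = 2
    rw [neg_neg]
    exact h8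
end

section
/- Let n ≥ 3 and d ≥ 2, and let (x^1, …, x^n; C) be a hard ball evolution with n balls in ℝ^d satisfying the normalizations (A3) and (A4). Then there exists a unique t₀ ∈ ℝ such that ⟨x(t), v(t+)⟩ < 0 for all t < t₀ and ⟨x(t), v(t+)⟩ > 0 for all t > t₀; moreover ⟨x(t₀), v(t₀+)⟩ ≥ 0 and |x(t)| ≥ |x(t₀)| for all t ∈ ℝ. -/
namespace HardBallEvolution

variable {n d : ℕ}

/-- `⟨x(t), v(t−)⟩`, the left-limit analogue of `xvInner`. -/
noncomputable def hInner (E : HardBallEvolution n d) (t : ℝ) : ℝ :=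
  ∑ j, (inner ℝ (E.x j t) (E.vL j t) : ℝ)

private lemma exists_pos_le_forall {ι : Type*} [Fintype ι] (f : ι → ℝ) (hf : ∀ i, 0 < f i) :
    ∃ ε > 0, ∀ i, ε ≤ f i := by
  classical
  cases isEmpty_or_nonempty ι with
  | inl h => exact ⟨1, one_pos, fun i => (IsEmpty.elim h i)⟩
  | inr h =>
    refine ⟨Finset.univ.inf' Finset.univ_nonempty f, ?_,
      fun i => Finset.inf'_le _ (Finset.mem_univ i)⟩
    exact (Finset.lt_inf'_iff _).2 fun i _ => hf i

private lemma sq_norm_smul (c : ℝ) (v : EuclideanSpace ℝ (Fin d)) :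
    ‖c • v‖ ^ 2 = c ^ 2 * ‖v‖ ^ 2 := by
  rw [norm_smul, mul_pow, Real.norm_eq_abs, sq_abs]

/-- Local structure of `xvInner` and of `∑ ‖x j ·‖²` near any time `t`. -/
lemma local_structure (E : HardBallEvolution n d) (hA4 : E.A4) (t : ℝ) : ∃ ε > 0,
    (∀ s, t ≤ s → s < t + ε → E.xvInner s = E.xvInner t + (s - t)) ∧
    (∀ s, t - ε < s → s < t → E.xvInner s = E.hInner t + (s - t)) ∧
    (∀ s, t ≤ s → s < t + ε →
      (∑ j, ‖E.x j s‖ ^ 2) = (∑ j, ‖E.x j t‖ ^ 2) + 2 * (s - t) * E.xvInner t + (s - t) ^ 2) ∧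
    (∀ s, t - ε < s → s ≤ t →
      (∑ j, ‖E.x j s‖ ^ 2) = (∑ j, ‖E.x j t‖ ^ 2) + 2 * (s - t) * E.hInner t + (s - t) ^ 2) := by
  classical
  choose εR hεRpos hxR using fun j => E.affineR j t
  choose εL hεLpos hxL using fun j => E.affineL j t
  obtain ⟨ε1, hε1, hε1le⟩ := exists_pos_le_forall εR hεRpos
  obtain ⟨ε2, hε2, hε2le⟩ := exists_pos_le_forall εL hεLpos
  refine ⟨min ε1 ε2, lt_min hε1 hε2, ?_⟩
  set ε := min ε1 ε2 with hεdef
  have hεε1 : ε ≤ ε1 := min_le_left _ _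
  have hεε2 : ε ≤ ε2 := min_le_right _ _
  have hεpos : 0 < ε := lt_min hε1 hε2
  -- (a) affine on the right with slope vR j t
  have ha : ∀ j (s : ℝ), t ≤ s → s < t + ε → E.x j s = E.x j t + (s - t) • E.vR j t := by
    intro j s h1 h2
    exact hxR j s h1 (by have := hε1le j; linarith)
  -- (b) affine on the left with slope vL j t
  have hb : ∀ j (s : ℝ), t - ε < s → s ≤ t → E.x j s = E.x j t + (s - t) • E.vL j t := by
    intro j s h1 h2
    exact hxL j s (by have := hε2le j; linarith) h2
  -- (c) right velocity constant on the right
  have hcR : ∀ j (s : ℝ), t < s → s < t + ε → E.vR j s = E.vR j t := by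
    intro j s hts hst
    obtain ⟨δ, hδ, hxs⟩ := E.affineR j s
    set r := (s + min (s + δ) (t + ε)) / 2 with hr
    have h1 : s < min (s + δ) (t + ε) := lt_min (by linarith) hst
    have hsr : s < r := by rw [hr]; linarith
    have hrδ : r < s + δ := by
      have := min_le_left (s + δ) (t + ε); rw [hr]; linarith
    have hrε : r < t + ε := by
      have := min_le_right (s + δ) (t + ε); rw [hr]; linarith
    have e1 := hxs r hsr.le hrδ
    have e2 := ha j r (by linarith) hrε
    have e3 := ha j s hts.le hst
    have key : E.x j s + (r - s) • E.vR j s = E.x j s + (r - s) • E.vR j t := by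
      rw [← e1, e2, e3]; module
    exact smul_right_injective (EuclideanSpace ℝ (Fin d)) (sub_ne_zero.2 hsr.ne')
      (add_left_cancel key)
  -- (d) right velocity on the left equals vL j t
  have hcL : ∀ j (s : ℝ), t - ε < s → s < t → E.vR j s = E.vL j t := by
    intro j s hts hst
    obtain ⟨δ, hδ, hxs⟩ := E.affineR j s
    set r := (s + min (s + δ) t) / 2 with hr
    have h1 : s < min (s + δ) t := lt_min (by linarith) hst
    have hsr : s < r := by rw [hr]; linarith
    have hrδ : r < s + δ := by
      have := min_le_left (s + δ) t; rw [hr]; linarith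
    have hrt : r < t := by
      have := min_le_right (s + δ) t; rw [hr]; linarith
    have e1 := hxs r hsr.le hrδ
    have e2 := hb j r (by linarith) hrt.le
    have e3 := hb j s hts hst.le
    have key : E.x j s + (r - s) • E.vR j s = E.x j s + (r - s) • E.vL j t := by
      rw [← e1, e2, e3]; module
    exact smul_right_injective (EuclideanSpace ℝ (Fin d)) (sub_ne_zero.2 hsr.ne')
      (add_left_cancel key)
  -- total left kinetic energy is also 1
  have hL4 : (∑ j, ‖E.vL j t‖ ^ 2) = 1 := by
    have h1 : ∀ j : Fin n, E.vL j t = E.vR j (t - ε / 2) :=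
      fun j => (hcL j (t - ε / 2) (by linarith) (by linarith)).symm
    calc (∑ j, ‖E.vL j t‖ ^ 2) = ∑ j, ‖E.vR j (t - ε / 2)‖ ^ 2 :=
          Finset.sum_congr rfl fun j _ => by rw [h1 j]
      _ = 1 := hA4 _
  refine ⟨?_, ?_, ?_, ?_⟩
  · -- g on the right
    intro s hts hst
    rcases eq_or_lt_of_le hts with rfl | hts'
    · simp
    · have hpt : ∀ j : Fin n, (inner ℝ (E.x j s) (E.vR j s) : ℝ)
          = inner ℝ (E.x j t) (E.vR j t) + (s - t) * ‖E.vR j t‖ ^ 2 := by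
        intro j
        rw [hcR j s hts' hst, ha j s hts hst, inner_add_left, real_inner_smul_left,
          real_inner_self_eq_norm_sq]
      unfold xvInner
      rw [Finset.sum_congr rfl fun j _ => hpt j, Finset.sum_add_distrib, ← Finset.mul_sum,
        hA4 t, mul_one]
  · -- g on the left
    intro s hts hst
    have hpt : ∀ j : Fin n, (inner ℝ (E.x j s) (E.vR j s) : ℝ)
        = inner ℝ (E.x j t) (E.vL j t) + (s - t) * ‖E.vL j t‖ ^ 2 := by
      intro j
      rw [hcL j s hts hst, hb j s hts hst.le, inner_add_left, real_inner_smul_left,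
        real_inner_self_eq_norm_sq]
    unfold xvInner hInner
    rw [Finset.sum_congr rfl fun j _ => hpt j, Finset.sum_add_distrib, ← Finset.mul_sum,
      hL4, mul_one]
  · -- f on the right
    intro s hts hst
    have hpt : ∀ j : Fin n, ‖E.x j s‖ ^ 2
        = ‖E.x j t‖ ^ 2 + (2 * (s - t)) * (inner ℝ (E.x j t) (E.vR j t) : ℝ)
          + (s - t) ^ 2 * ‖E.vR j t‖ ^ 2 := by
      intro j
      rw [ha j s hts hst, norm_add_sq_real, real_inner_smul_right, sq_norm_smul]
      ring
    unfold xvInner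
    rw [Finset.sum_congr rfl fun j _ => hpt j, Finset.sum_add_distrib, Finset.sum_add_distrib,
      ← Finset.mul_sum, ← Finset.mul_sum, hA4 t, mul_one]
  · -- f on the left
    intro s hts hst
    have hpt : ∀ j : Fin n, ‖E.x j s‖ ^ 2
        = ‖E.x j t‖ ^ 2 + (2 * (s - t)) * (inner ℝ (E.x j t) (E.vL j t) : ℝ)
          + (s - t) ^ 2 * ‖E.vL j t‖ ^ 2 := by
      intro j
      rw [hb j s hts hst, norm_add_sq_real, real_inner_smul_right, sq_norm_smul]
      ring
    unfold hInner
    rw [Finset.sum_congr rfl fun j _ => hpt j, Finset.sum_add_distrib, Finset.sum_add_distrib,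
      ← Finset.mul_sum, ← Finset.mul_sum, hL4, mul_one]

/-- At every time, `⟨x, v(t+)⟩ ≥ ⟨x, v(t−)⟩` (the inner product jumps up at collisions). -/
lemma hInner_le_xvInner (E : HardBallEvolution n d) (t : ℝ) : E.hInner t ≤ E.xvInner t := by
  classical
  by_cases htC : t ∈ E.C
  · obtain ⟨j, k, hjk, hdist, _, hneg, hvRj, hvRk, hother⟩ := E.collision t htC
    set u : EuclideanSpace ℝ (Fin d) := ‖E.x j t - E.x k t‖⁻¹ • (E.x j t - E.x k t) with hu
    set c : ℝ := inner ℝ (E.vL k t - E.vL j t) u with hc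
    have hcpos : 0 < c := by
      have : (inner ℝ (E.vL j t - E.vL k t) u : ℝ) = -c := by
        rw [hc, inner_sub_left, inner_sub_left]; ring
      rw [this] at hneg; linarith
    have key : E.xvInner t - E.hInner t
        = ∑ i, (inner ℝ (E.x i t) (E.vR i t - E.vL i t) : ℝ) := by
      unfold xvInner hInner
      rw [← Finset.sum_sub_distrib]
      exact Finset.sum_congr rfl fun i _ => by rw [inner_sub_right]
    have hsum : (∑ i, (inner ℝ (E.x i t) (E.vR i t - E.vL i t) : ℝ))
        = inner ℝ (E.x j t) (E.vR j t - E.vL j t) + inner ℝ (E.x k t) (E.vR k t - E.vL k t) := by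
      have h0 : (∑ i : Fin n, (inner ℝ (E.x i t) (E.vR i t - E.vL i t) : ℝ))
          = ∑ i ∈ ({j, k} : Finset (Fin n)), (inner ℝ (E.x i t) (E.vR i t - E.vL i t) : ℝ) := by
        refine (Finset.sum_subset (Finset.subset_univ _) ?_).symm
        intro i _ hi
        simp only [Finset.mem_insert, Finset.mem_singleton, not_or] at hi
        rw [hother i hi.1 hi.2, sub_self, inner_zero_right]
      rw [h0, Finset.sum_pair hjk]
    have hdj : E.vR j t - E.vL j t = c • u := by rw [hvRj]; abel
    have hdk : E.vR k t - E.vL k t = (-c) • u := by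
      have : (inner ℝ (E.vL j t - E.vL k t) u : ℝ) = -c := by
        rw [hc, inner_sub_left, inner_sub_left]; ring
      rw [hvRk, this]; abel
    have hxu : (inner ℝ (E.x j t - E.x k t) u : ℝ) = 2 := by
      rw [hu, real_inner_smul_right, real_inner_self_eq_norm_sq, hdist]
      norm_num
    have hfinal : E.xvInner t - E.hInner t = 2 * c := by
      have e1 : (inner ℝ (E.x j t) (c • u) : ℝ) = c * inner ℝ (E.x j t) u :=
        real_inner_smul_right _ _ _
      have e2 : (inner ℝ (E.x k t) ((-c) • u) : ℝ) = -c * inner ℝ (E.x k t) u :=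
        real_inner_smul_right _ _ _
      have h3 : (inner ℝ (E.x j t) u : ℝ) - inner ℝ (E.x k t) u = 2 := by
        rw [← inner_sub_left]; exact hxu
      rw [key, hsum, hdj, hdk, e1, e2]
      linear_combination c * h3
    linarith
  · have : ∀ i : Fin n, E.vR i t = E.vL i t := fun i => E.noKink i t htC
    unfold xvInner hInner
    exact le_of_eq (Finset.sum_congr rfl fun i _ => by rw [this i])

/-- Global monotonicity: `⟨x,v(·+)⟩` grows at least linearly with slope 1. -/
lemma xvInner_mono (E : HardBallEvolution n d) (hA4 : E.A4) {s t : ℝ} (hst : s ≤ t) :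
    E.xvInner s + (t - s) ≤ E.xvInner t := by
  set A : Set ℝ := {r | r ∈ Set.Icc s t ∧ E.xvInner s + (r - s) ≤ E.xvInner r} with hA
  have hsA : s ∈ A := ⟨⟨le_refl s, hst⟩, by simp⟩
  have hne : A.Nonempty := ⟨s, hsA⟩
  have hbdd : BddAbove A := ⟨t, fun r hr => hr.1.2⟩
  set T := sSup A with hT
  have hTs : s ≤ T := le_csSup hbdd hsA
  have hTt : T ≤ t := csSup_le hne fun r hr => hr.1.2
  obtain ⟨ε, hε, hgR, hgL, -, -⟩ := E.local_structure hA4 T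
  have hTA : T ∈ A := by
    by_cases h : T ∈ A
    · exact h
    · obtain ⟨r, hrA, hrT⟩ := exists_lt_of_lt_csSup hne (show T - ε < T by linarith)
      have hrT' : r < T :=
        lt_of_le_of_ne (le_csSup hbdd hrA) (fun h' => h (h' ▸ hrA))
      have h1 := hgL r hrT hrT'
      have h2 := hrA.2
      have h3 := E.hInner_le_xvInner T
      exact ⟨⟨hTs, hTt⟩, by linarith⟩
  rcases eq_or_lt_of_le hTt with heq | hTt'
  · exact heq ▸ hTA.2
  · exfalso
    set r := min (T + ε / 2) t with hr
    have hrT : T < r := lt_min (by linarith) hTt'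
    have hrt : r ≤ t := min_le_right _ _
    have hrε : r < T + ε := lt_of_le_of_lt (min_le_left _ _) (by linarith)
    have hgr := hgR r hrT.le hrε
    have h2 := hTA.2
    have hrA : r ∈ A := ⟨⟨le_trans hTs hrT.le, hrt⟩, by linarith⟩
    exact absurd (le_csSup hbdd hrA) (not_le.2 hrT)

end HardBallEvolution

/-- **Remark 4.3 of [BuD18b].** Under (A3) and (A4) there is a unique time `t₀`
such that `⟨x(t), v(t+)⟩ < 0` for `t < t₀` and `⟨x(t), v(t+)⟩ > 0` for `t > t₀`;
moreover `⟨x(t₀), v(t₀+)⟩ ≥ 0` and `|x(t)| ≥ |x(t₀)|` for all `t`. -/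
theorem exists_unique_sign_change_time (n d : ℕ) (hn : 3 ≤ n) (hd : 2 ≤ d)
    (E : HardBallEvolution n d) (hA3 : E.A3) (hA4 : E.A4) :
    ∃ t₀ : ℝ,
      ((∀ t < t₀, E.xvInner t < 0) ∧ (∀ t > t₀, 0 < E.xvInner t)) ∧
      0 ≤ E.xvInner t₀ ∧
      (∀ t : ℝ, E.xnorm t₀ ≤ E.xnorm t) ∧
      ∀ t₁ : ℝ, ((∀ t < t₁, E.xvInner t < 0) ∧ (∀ t > t₁, 0 < E.xvInner t)) → t₁ = t₀ := by
  classical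
  have mono : ∀ s t : ℝ, s ≤ t → E.xvInner s + (t - s) ≤ E.xvInner t :=
    fun s t h => E.xvInner_mono hA4 h
  set N : Set ℝ := {t | E.xvInner t < 0} with hN
  have hNne : N.Nonempty := by
    refine ⟨-(|E.xvInner 0| + 1), ?_⟩
    have h1 := mono (-(|E.xvInner 0| + 1)) 0 (by have := abs_nonneg (E.xvInner 0); linarith)
    have h2 := le_abs_self (E.xvInner 0)
    simp only [hN, Set.mem_setOf_eq]
    linarith
  have hNbdd : BddAbove N := by
    refine ⟨|E.xvInner 0| + 1, fun r hr => ?_⟩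
    simp only [hN, Set.mem_setOf_eq] at hr
    rcases le_or_gt r 0 with h | h
    · have := abs_nonneg (E.xvInner 0); linarith
    · have h1 := mono 0 r h.le
      have h2 := neg_abs_le (E.xvInner 0)
      linarith
  set t₀ := sSup N with ht₀
  have hneg : ∀ t < t₀, E.xvInner t < 0 := by
    intro t ht
    obtain ⟨u, huN, htu⟩ := exists_lt_of_lt_csSup hNne ht
    have h1 := mono t u htu.le
    have h2 : E.xvInner u < 0 := huN
    linarith
  have hnonneg : ∀ t, t₀ < t → 0 ≤ E.xvInner t := by
    intro t ht
    by_contra h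
    push_neg at h
    exact absurd (le_csSup hNbdd (show t ∈ N from h)) (not_le.2 ht)
  have hpos : ∀ t, t₀ < t → 0 < E.xvInner t := by
    intro t ht
    have hmid : t₀ < (t₀ + t) / 2 := by linarith
    have h1 := hnonneg _ hmid
    have h2 := mono ((t₀ + t) / 2) t (by linarith)
    linarith
  have hg0 : 0 ≤ E.xvInner t₀ := by
    obtain ⟨ε, hε, hgR, -, -, -⟩ := E.local_structure hA4 t₀
    by_contra h
    push_neg at h
    set δ := min (ε / 2) (-(E.xvInner t₀) / 2) with hδ
    have hδpos : 0 < δ := lt_min (by linarith) (by linarith)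
    have hδε : δ ≤ ε / 2 := min_le_left _ _
    have h1 := hgR (t₀ + δ) (by linarith) (by linarith)
    have h2 := hpos (t₀ + δ) (by linarith)
    have h3 : δ ≤ -(E.xvInner t₀) / 2 := min_le_right _ _
    linarith
  have hgnn : ∀ t, t₀ ≤ t → 0 ≤ E.xvInner t := by
    intro t ht; have := mono t₀ t ht; linarith
  have hhnp : ∀ t, t ≤ t₀ → E.hInner t ≤ 0 := by
    intro t ht
    obtain ⟨ε, hε, -, hgL, -, -⟩ := E.local_structure hA4 t
    by_contra h
    push_neg at h
    set δ := min (ε / 2) (E.hInner t) with hδ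
    have hδpos : 0 < δ := lt_min (by linarith) h
    have hδε : δ ≤ ε / 2 := min_le_left _ _
    have h3 : δ ≤ E.hInner t := min_le_right _ _
    have h1 := hgL (t - δ) (by linarith) (by linarith)
    have h2 : E.xvInner (t - δ) < 0 := hneg _ (by linarith)
    linarith
  have hfc : Continuous (fun r : ℝ => ∑ j, ‖E.x j r‖ ^ 2) :=
    continuous_finset_sum _ fun j _ => ((E.cont j).norm.pow 2)
  have hfR : ∀ a b : ℝ, t₀ ≤ a → a ≤ b → (∑ j, ‖E.x j a‖ ^ 2) ≤ ∑ j, ‖E.x j b‖ ^ 2 := by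
    intro a b ha hab
    set A : Set ℝ := {r | r ∈ Set.Icc a b ∧ (∑ j, ‖E.x j a‖ ^ 2) ≤ ∑ j, ‖E.x j r‖ ^ 2} with hAdef
    have hAcl : IsClosed A := by
      have : A = Set.Icc a b ∩ {r | (∑ j, ‖E.x j a‖ ^ 2) ≤ ∑ j, ‖E.x j r‖ ^ 2} := rfl
      rw [this]
      exact isClosed_Icc.inter (isClosed_le continuous_const hfc)
    have hAne : A.Nonempty := ⟨a, ⟨le_refl a, hab⟩, le_refl _⟩
    have hAbdd : BddAbove A := ⟨b, fun r hr => hr.1.2⟩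
    have hTA : sSup A ∈ A := hAcl.csSup_mem hAne hAbdd
    set T := sSup A with hT
    rcases eq_or_lt_of_le hTA.1.2 with heq | hlt
    · exact hTA.2.trans (le_of_eq (by rw [heq]))
    · exfalso
      obtain ⟨ε, hε, -, -, hfRloc, -⟩ := E.local_structure hA4 T
      set r := min (T + ε / 2) b with hr
      have hrT : T < r := lt_min (by linarith) hlt
      have h1 := hfRloc r hrT.le (lt_of_le_of_lt (min_le_left _ _) (by linarith))
      have h2 : 0 ≤ E.xvInner T := hgnn T (le_trans ha hTA.1.1)
      have hprod : 0 ≤ 2 * (r - T) * E.xvInner T :=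
        mul_nonneg (by linarith) h2
      have hrA : r ∈ A := ⟨⟨le_trans hTA.1.1 hrT.le, min_le_right _ _⟩, by
        have := hTA.2
        nlinarith [sq_nonneg (r - T)]⟩
      exact absurd (le_csSup hAbdd hrA) (not_le.2 hrT)
  have hfL : ∀ a b : ℝ, a ≤ b → b ≤ t₀ → (∑ j, ‖E.x j b‖ ^ 2) ≤ ∑ j, ‖E.x j a‖ ^ 2 := by
    intro a b hab hb
    set A : Set ℝ := {r | r ∈ Set.Icc a b ∧ (∑ j, ‖E.x j b‖ ^ 2) ≤ ∑ j, ‖E.x j r‖ ^ 2} with hAdef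
    have hAcl : IsClosed A := by
      have : A = Set.Icc a b ∩ {r | (∑ j, ‖E.x j b‖ ^ 2) ≤ ∑ j, ‖E.x j r‖ ^ 2} := rfl
      rw [this]
      exact isClosed_Icc.inter (isClosed_le continuous_const hfc)
    have hAne : A.Nonempty := ⟨b, ⟨hab, le_refl b⟩, le_refl _⟩
    have hAbdd : BddBelow A := ⟨a, fun r hr => hr.1.1⟩
    have hTA : sInf A ∈ A := hAcl.csInf_mem hAne hAbdd
    set T := sInf A with hT
    rcases eq_or_lt_of_le hTA.1.1 with heq | hlt
    · exact hTA.2.trans (le_of_eq (by rw [heq]))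
    · exfalso
      obtain ⟨ε, hε, -, -, -, hfLloc⟩ := E.local_structure hA4 T
      set s := max (T - ε / 2) a with hs
      have hsT : s < T := max_lt (by linarith) hlt
      have h1 := hfLloc s (lt_of_lt_of_le (by linarith) (le_max_left _ _)) hsT.le
      have hhT : E.hInner T ≤ 0 := hhnp T (le_trans hTA.1.2 hb)
      have hprod : 0 ≤ 2 * (s - T) * E.hInner T := by nlinarith
      have hsA : s ∈ A := ⟨⟨le_max_right _ _, le_trans hsT.le hTA.1.2⟩, by
        have := hTA.2
        nlinarith [sq_nonneg (s - T)]⟩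
      exact absurd (csInf_le hAbdd hsA) (not_le.2 hsT)
  refine ⟨t₀, ⟨hneg, hpos⟩, hg0, ?_, ?_⟩
  · intro t
    unfold HardBallEvolution.xnorm
    rcases le_total t₀ t with h | h
    · exact Real.sqrt_le_sqrt (hfR t₀ t (le_refl _) h)
    · exact Real.sqrt_le_sqrt (hfL t t₀ h (le_refl _))
  · rintro t₁ ⟨h1, h2⟩
    by_contra hne
    rcases lt_or_gt_of_ne hne with h | h
    · have ha := h2 ((t₁ + t₀) / 2) (by simp only [gt_iff_lt]; linarith)
      have hb := hneg ((t₁ + t₀) / 2) (by linarith)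
      linarith
    · have ha := h1 ((t₀ + t₁) / 2) (by linarith)
      have hb := hpos ((t₀ + t₁) / 2) (by linarith)
      linarith
end

section
/- Let d ≥ 1 and n ≥ 1, let u ∈ ℝ, and let x^1, …, x^n : [u, u+1] → ℝ^d be 1-Lipschitz functions such that |x^j(t) − x^k(t)| ≥ 2 for all j ≠ k and all t ∈ [u, u+1]. Then for every fixed index j, the set {k ≠ j : there exists t ∈ [u, u+1] with |x^j(t) − x^k(t)| = 2} has cardinality at most 5^d. -/
open MeasureTheory Metric ENNReal

/-- **Step 2 of the proof of Theorem 1.1 (per-ball version).** If `n` unit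
balls move with speeds at most 1 (centers `1`-Lipschitz) during a unit time
interval and never overlap, then a given ball can touch at most `5^d` other
balls during that interval. -/
theorem touching_balls_in_unit_time (d n : ℕ) (hd : 1 ≤ d) (hn : 1 ≤ n) (u : ℝ)
    (x : Fin n → ℝ → EuclideanSpace ℝ (Fin d))
    (hlip : ∀ j, ∀ s ∈ Set.Icc u (u + 1), ∀ t ∈ Set.Icc u (u + 1),
      ‖x j s - x j t‖ ≤ |s - t|)
    (hsep : ∀ j k, j ≠ k → ∀ t ∈ Set.Icc u (u + 1), 2 ≤ ‖x j t - x k t‖)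
    (j : Fin n) :
    {k : Fin n | k ≠ j ∧ ∃ t ∈ Set.Icc u (u + 1), ‖x j t - x k t‖ = 2}.ncard ≤ 5 ^ d := by
  classical
  have hE : Nontrivial (EuclideanSpace ℝ (Fin d)) := by
    have : Nonempty (Fin d) := ⟨⟨0, hd⟩⟩
    infer_instance
  set P : Fin n → Prop := fun k => k ≠ j ∧ ∃ t ∈ Set.Icc u (u + 1), ‖x j t - x k t‖ = 2
  set T : Finset (Fin n) := Finset.univ.filter P with hT
  have hset : {k : Fin n | P k} = ↑T := by
    ext k; simp [hT]
  rw [hset, Set.ncard_coe_finset]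
  have hu : u ∈ Set.Icc u (u + 1) := by constructor <;> linarith
  -- centers at time u are within distance 4 of x j u
  have hnear : ∀ k ∈ T, ‖x k u - x j u‖ ≤ 4 := by
    intro k hk
    simp only [hT, Finset.mem_filter] at hk
    obtain ⟨-, -, t, ht, hdist⟩ := hk
    have h1 : ‖x k u - x k t‖ ≤ |u - t| := hlip k u hu t ht
    have h2 : ‖x j t - x j u‖ ≤ |t - u| := hlip j t ht u hu
    have h3 : |u - t| ≤ 1 := by
      rw [abs_le]; obtain ⟨h4, h5⟩ := ht; constructor <;> linarith
    have h4 : |t - u| ≤ 1 := by rw [abs_sub_comm]; exact h3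
    have key : x k u - x j u = (x k u - x k t) + (x k t - x j t) + (x j t - x j u) := by
      abel
    calc ‖x k u - x j u‖ ≤ ‖(x k u - x k t) + (x k t - x j t)‖ + ‖x j t - x j u‖ := by
            rw [key]; exact norm_add_le _ _
      _ ≤ ‖x k u - x k t‖ + ‖x k t - x j t‖ + ‖x j t - x j u‖ := by
            gcongr; exact norm_add_le _ _
      _ ≤ 1 + 2 + 1 := by
            have : ‖x k t - x j t‖ = 2 := by rw [norm_sub_rev]; exact hdist
            gcongr <;> linarith
      _ = 4 := by norm_num
  -- the unit balls around the centers at time u are pairwise disjoint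
  have hdisj : (T : Set (Fin n)).PairwiseDisjoint fun k => ball (x k u) 1 := by
    intro k _ l _ hkl
    apply ball_disjoint_ball
    have := hsep k l hkl u hu
    calc (1 : ℝ) + 1 = 2 := by norm_num
      _ ≤ ‖x k u - x l u‖ := this
      _ = dist (x k u) (x l u) := by rw [dist_eq_norm]
  -- and contained in the closed ball of radius 5 around x j u
  have hsub : ∀ k ∈ T, ball (x k u) 1 ⊆ closedBall (x j u) 5 := by
    intro k hk y hy
    rw [mem_ball, dist_eq_norm] at hy
    rw [mem_closedBall, dist_eq_norm]
    have : y - x j u = (y - x k u) + (x k u - x j u) := by abel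
    calc ‖y - x j u‖ ≤ ‖y - x k u‖ + ‖x k u - x j u‖ := by rw [this]; exact norm_add_le _ _
      _ ≤ 1 + 4 := by have := hnear k hk; linarith [hy.le]
      _ = 5 := by norm_num
  -- volume argument
  set v : ℝ≥0∞ := volume (ball (0 : EuclideanSpace ℝ (Fin d)) 1) with hv
  have hvpos : v ≠ 0 := (measure_ball_pos _ _ one_pos).ne'
  have hvtop : v ≠ ⊤ := measure_ball_lt_top.ne
  have hfr : Module.finrank ℝ (EuclideanSpace ℝ (Fin d)) = d := finrank_euclideanSpace_fin
  have hball : ∀ k : Fin n, volume (ball (x k u) 1) = v := by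
    intro k
    rw [Measure.addHaar_ball volume _ zero_le_one, hfr]
    simp [hv]
  have hsum : (T.card : ℝ≥0∞) * v = volume (⋃ k ∈ T, ball (x k u) 1) := by
    rw [measure_biUnion_finset hdisj (fun k _ => measurableSet_ball)]
    simp only [hball]
    rw [Finset.sum_const, nsmul_eq_mul]
  have hle : volume (⋃ k ∈ T, ball (x k u) 1) ≤ volume (closedBall (x j u) 5) :=
    measure_mono (Set.iUnion₂_subset hsub)
  have hcb : volume (closedBall (x j u) (5 : ℝ)) = (5 : ℝ≥0∞) ^ d * v := by
    rw [Measure.addHaar_closedBall volume _ (by norm_num : (0:ℝ) ≤ 5), hfr, hv]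
    congr 1
    rw [ENNReal.ofReal_pow (by norm_num : (0:ℝ) ≤ 5)]
    norm_num
  have hfinal : (T.card : ℝ≥0∞) * v ≤ (5 : ℝ≥0∞) ^ d * v := by
    rw [hsum, ← hcb]; exact hle
  have : (T.card : ℝ≥0∞) ≤ (5 : ℝ≥0∞) ^ d :=
    (ENNReal.mul_le_mul_iff_left hvpos hvtop).mp hfinal
  have h5 : ((5 ^ d : ℕ) : ℝ≥0∞) = (5 : ℝ≥0∞) ^ d := by push_cast; ring
  rw [← h5] at this
  exact_mod_cast this
end

section
/- Let d ≥ 1 and n ≥ 1, let u ∈ ℝ, and let x^1, …, x^n : [u, u+1] → ℝ^d be 1-Lipschitz functions such that |x^j(t) − x^k(t)| ≥ 2 for all j ≠ k and all t ∈ [u, u+1]. Then the set of unordered pairs {j, k} with j ≠ k for which there exists t ∈ [u, u+1] with |x^j(t) − x^k(t)| = 2 has cardinality at most 5^d · n / 2. -/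
open MeasureTheory Metric
open scoped ENNReal

lemma card_le_pow_of_sep {d : ℕ} (hd : 1 ≤ d) {ι : Type*} (s : Finset ι)
    (c : EuclideanSpace ℝ (Fin d)) (y : ι → EuclideanSpace ℝ (Fin d))
    (hc : ∀ i ∈ s, dist (y i) c ≤ 4)
    (hsep2 : ∀ i ∈ s, ∀ j ∈ s, i ≠ j → 2 ≤ dist (y i) (y j)) :
    s.card ≤ 5 ^ d := by
  classical
  haveI : Nonempty (Fin d) := ⟨⟨0, hd⟩⟩
  haveI : Nontrivial (EuclideanSpace ℝ (Fin d)) := inferInstance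
  set V := volume (ball (0 : EuclideanSpace ℝ (Fin d)) 1) with hVdef
  have hdisj : (s : Set ι).PairwiseDisjoint (fun i => ball (y i) 1) := by
    intro i hi j hj hij
    exact ball_disjoint_ball (by linarith [hsep2 i hi j hj hij])
  have hmeas := measure_biUnion_finset (μ := volume) hdisj (fun i _ => measurableSet_ball)
  have hsub : (⋃ i ∈ s, ball (y i) 1) ⊆ ball c 5 := by
    intro z hz
    simp only [Set.mem_iUnion] at hz
    obtain ⟨i, hi, hzi⟩ := hz
    have h4 := hc i hi
    rw [mem_ball] at hzi ⊢
    calc dist z c ≤ dist z (y i) + dist (y i) c := dist_triangle _ _ _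
      _ < 5 := by linarith
  have h1 : ∑ i ∈ s, volume (ball (y i) 1) ≤ volume (ball c 5) :=
    hmeas ▸ measure_mono hsub
  have heach : ∀ i ∈ s, volume (ball (y i) 1) = V := fun i _ =>
    Measure.addHaar_ball_center volume (y i) 1
  rw [Finset.sum_congr rfl heach, Finset.sum_const, nsmul_eq_mul] at h1
  have hbig : volume (ball c 5) = ENNReal.ofReal ((5:ℝ) ^ d) * V := by
    rw [Measure.addHaar_ball volume c (by norm_num : (0:ℝ) ≤ 5)]
    simp [finrank_euclideanSpace_fin, hVdef]
  rw [hbig] at h1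
  have hV0 : V ≠ 0 := (measure_ball_pos volume 0 one_pos).ne'
  have hVtop : V ≠ ⊤ := measure_ball_lt_top.ne
  have h2 : (s.card : ℝ≥0∞) ≤ ENNReal.ofReal ((5:ℝ) ^ d) :=
    (ENNReal.mul_le_mul_iff_left hV0 hVtop).mp h1
  have h3 : ENNReal.ofReal ((5:ℝ) ^ d) = ((5 ^ d : ℕ) : ℝ≥0∞) := by
    push_cast
    rw [ENNReal.ofReal_pow (by norm_num)]
    norm_num
  rw [h3] at h2
  exact_mod_cast h2

/-- **Step 2 of the proof of Theorem 1.1 (pairs version).** If `n` unit balls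
move with speeds at most 1 (centers `1`-Lipschitz) during a unit time interval
and never overlap, then at most `5^d · n / 2` unordered pairs of balls can
touch during that interval. -/
theorem touching_pairs_in_unit_time (d n : ℕ) (hd : 1 ≤ d) (hn : 1 ≤ n) (u : ℝ)
    (x : Fin n → ℝ → EuclideanSpace ℝ (Fin d))
    (hlip : ∀ j, ∀ s ∈ Set.Icc u (u + 1), ∀ t ∈ Set.Icc u (u + 1),
      ‖x j s - x j t‖ ≤ |s - t|)
    (hsep : ∀ j k, j ≠ k → ∀ t ∈ Set.Icc u (u + 1), 2 ≤ ‖x j t - x k t‖) :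
    ({p : Fin n × Fin n | p.1 < p.2 ∧
        ∃ t ∈ Set.Icc u (u + 1), ‖x p.1 t - x p.2 t‖ = 2}.ncard : ℝ) ≤
      5 ^ d * n / 2 := by
  classical
  have hTsymm : ∀ j k : Fin n, (∃ t ∈ Set.Icc u (u + 1), ‖x j t - x k t‖ = 2) →
      (∃ t ∈ Set.Icc u (u + 1), ‖x k t - x j t‖ = 2) := by
    rintro j k ⟨t, ht, h⟩
    exact ⟨t, ht, by rwa [norm_sub_rev]⟩
  let E : Finset (Fin n × Fin n) :=
    Finset.univ.filter (fun p => p.1 < p.2 ∧ ∃ t ∈ Set.Icc u (u + 1), ‖x p.1 t - x p.2 t‖ = 2)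
  let E' : Finset (Fin n × Fin n) :=
    Finset.univ.filter (fun p => p.2 < p.1 ∧ ∃ t ∈ Set.Icc u (u + 1), ‖x p.1 t - x p.2 t‖ = 2)
  let O : Finset (Fin n × Fin n) :=
    Finset.univ.filter (fun p => p.1 ≠ p.2 ∧ ∃ t ∈ Set.Icc u (u + 1), ‖x p.1 t - x p.2 t‖ = 2)
  have hmemE : ∀ p : Fin n × Fin n, p ∈ E ↔
      p.1 < p.2 ∧ ∃ t ∈ Set.Icc u (u + 1), ‖x p.1 t - x p.2 t‖ = 2 := by
    intro p; simp [E]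
  have hmemE' : ∀ p : Fin n × Fin n, p ∈ E' ↔
      p.2 < p.1 ∧ ∃ t ∈ Set.Icc u (u + 1), ‖x p.1 t - x p.2 t‖ = 2 := by
    intro p; simp [E']
  have hmemO : ∀ p : Fin n × Fin n, p ∈ O ↔
      p.1 ≠ p.2 ∧ ∃ t ∈ Set.Icc u (u + 1), ‖x p.1 t - x p.2 t‖ = 2 := by
    intro p; simp [O]
  -- the set in the statement is the coercion of `E`
  have hncard : ({p : Fin n × Fin n | p.1 < p.2 ∧
      ∃ t ∈ Set.Icc u (u + 1), ‖x p.1 t - x p.2 t‖ = 2}).ncard = E.card := by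
    rw [← Set.ncard_coe_finset]
    congr 1
    ext p
    simp [E]
  -- O is the disjoint union of E and E'
  have hOsplit : O.card = E.card + E'.card := by
    have hunion : O = E ∪ E' := by
      ext p
      rw [Finset.mem_union, hmemO, hmemE, hmemE']
      constructor
      · rintro ⟨hne, hT⟩
        rcases lt_or_gt_of_ne hne with h | h
        · exact Or.inl ⟨h, hT⟩
        · exact Or.inr ⟨h, hT⟩
      · rintro (⟨h, hT⟩ | ⟨h, hT⟩)
        · exact ⟨ne_of_lt h, hT⟩
        · exact ⟨ne_of_gt h, hT⟩
    have hdis : Disjoint E E' := by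
      rw [Finset.disjoint_left]
      rintro p hp hp'
      rw [hmemE] at hp
      rw [hmemE'] at hp'
      exact absurd hp'.1 (not_lt_of_gt hp.1)
    rw [hunion, Finset.card_union_of_disjoint hdis]
  -- E and E' have the same cardinality via swapping
  have hEE' : E'.card = E.card := by
    refine Finset.card_bij' (fun p _ => p.swap) (fun p _ => p.swap) ?_ ?_ ?_ ?_
    · intro p hp
      rw [hmemE'] at hp
      rw [hmemE]
      exact ⟨hp.1, hTsymm _ _ hp.2⟩
    · intro p hp
      rw [hmemE] at hp
      rw [hmemE']
      exact ⟨hp.1, hTsymm _ _ hp.2⟩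
    · intro p _; exact Prod.swap_swap p
    · intro p _; exact Prod.swap_swap p
  -- count O fiberwise over the first coordinate
  have hfib : O.card = ∑ j : Fin n, (O.filter fun p => p.1 = j).card :=
    Finset.card_eq_sum_card_fiberwise (fun p _ => Finset.mem_univ p.1)
  -- each fiber has size at most 5^d
  have hdeg : ∀ j : Fin n, (O.filter fun p => p.1 = j).card ≤ 5 ^ d := by
    intro j
    let N : Finset (Fin n) :=
      Finset.univ.filter (fun k => k ≠ j ∧ ∃ t ∈ Set.Icc u (u + 1), ‖x j t - x k t‖ = 2)
    have hmemN : ∀ k, k ∈ N ↔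
        k ≠ j ∧ ∃ t ∈ Set.Icc u (u + 1), ‖x j t - x k t‖ = 2 := by
      intro k; simp [N]
    have hcardN : (O.filter fun p => p.1 = j).card = N.card := by
      refine Finset.card_bij' (fun p _ => p.2) (fun k _ => (j, k)) ?_ ?_ ?_ ?_
      · intro p hp
        rw [Finset.mem_filter, hmemO] at hp
        obtain ⟨⟨hne, hT⟩, h1⟩ := hp
        rw [hmemN]
        subst h1
        exact ⟨fun h => hne h.symm, hT⟩
      · intro k hk
        rw [hmemN] at hk
        rw [Finset.mem_filter, hmemO]
        exact ⟨⟨fun h => hk.1 h.symm, hk.2⟩, rfl⟩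
      · intro p hp
        rw [Finset.mem_filter] at hp
        exact Prod.ext hp.2.symm rfl
      · intro k _; rfl
    rw [hcardN]
    have hu : u ∈ Set.Icc u (u + 1) := ⟨le_refl u, by linarith⟩
    apply card_le_pow_of_sep hd N (x j u) (fun k => x k u)
    · intro k hk
      rw [hmemN] at hk
      obtain ⟨hne, t, ht, heq⟩ := hk
      have h1 : ‖x k u - x k t‖ ≤ |u - t| := hlip k u hu t ht
      have h2 : ‖x j t - x j u‖ ≤ |t - u| := hlip j t ht u hu
      have h3 : |u - t| ≤ 1 := abs_le.mpr ⟨by linarith [ht.1, ht.2], by linarith [ht.1]⟩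
      have h4 : |t - u| ≤ 1 := abs_le.mpr ⟨by linarith [ht.1], by linarith [ht.2]⟩
      have h5 : ‖x k t - x j t‖ = 2 := by rwa [norm_sub_rev]
      rw [dist_eq_norm]
      calc ‖x k u - x j u‖
          = ‖(x k u - x k t) + (x k t - x j t) + (x j t - x j u)‖ := by congr 1; abel
        _ ≤ ‖(x k u - x k t) + (x k t - x j t)‖ + ‖x j t - x j u‖ := norm_add_le _ _
        _ ≤ ‖x k u - x k t‖ + ‖x k t - x j t‖ + ‖x j t - x j u‖ := by
            gcongr; exact norm_add_le _ _
        _ ≤ 4 := by rw [h5]; linarith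
    · intro k _ k' _ hne
      rw [dist_eq_norm]
      exact hsep k k' hne u hu
  -- put everything together
  have hO : O.card ≤ n * 5 ^ d := by
    rw [hfib]
    calc ∑ j : Fin n, (O.filter fun p => p.1 = j).card
        ≤ ∑ _j : Fin n, 5 ^ d := Finset.sum_le_sum (fun j _ => hdeg j)
      _ = n * 5 ^ d := by simp [Finset.sum_const, Finset.card_univ]
  have hE2 : 2 * E.card ≤ n * 5 ^ d := by
    have : 2 * E.card = O.card := by rw [hOsplit, hEE']; ring
    omega
  rw [hncard]
  rw [le_div_iff₀ (by norm_num : (0:ℝ) < 2)]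
  have := (Nat.cast_le (α := ℝ)).mpr hE2
  push_cast at this ⊢
  linarith
end

section
/- Let n ≥ 2, let x_1, …, x_n be points in a metric space, and let γ > 0 be such that max_{1 ≤ j,k ≤ n} dist(x_j, x_k) > (n − 1)γ. Then there is a partition of {1, …, n} into two nonempty sets S and T such that dist(x_j, x_k) > γ for all j ∈ S and k ∈ T. -/
/-- Along a walk in the "close" graph, the distance is at most length·γ. -/
private lemma dist_le_walk_length {X : Type*} [MetricSpace X] {n : ℕ}
    (x : Fin n → X) (γ : ℝ) (G : SimpleGraph (Fin n))
    (hAdj : ∀ a b, G.Adj a b → dist (x a) (x b) ≤ γ)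
    {u v : Fin n} (p : G.Walk u v) : dist (x u) (x v) ≤ p.length * γ := by
  induction p with
  | nil => simp
  | cons hadj q ih =>
    rename_i a b c
    calc dist (x a) (x c) ≤ dist (x a) (x b) + dist (x b) (x c) := dist_triangle _ _ _
      _ ≤ γ + q.length * γ := add_le_add (hAdj _ _ hadj) ih
      _ = (q.cons hadj).length * γ := by
          simp [SimpleGraph.Walk.length_cons]; ring

/-- **Chain/splitting lemma (Step 5 of the proof of Theorem 1.1).** If the
maximal pairwise distance of `n ≥ 2` points in a metric space exceeds
`(n−1)γ`, the index set splits into two nonempty parts with all cross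
distances greater than `γ`. -/
theorem splitting_of_spread_points {X : Type*} [MetricSpace X] (n : ℕ) (hn : 2 ≤ n)
    (x : Fin n → X) (γ : ℝ) (hγ : 0 < γ)
    (h : ∃ j k : Fin n, ((n : ℝ) - 1) * γ < dist (x j) (x k)) :
    ∃ S T : Set (Fin n), S.Nonempty ∧ T.Nonempty ∧ S ∪ T = Set.univ ∧ S ∩ T = ∅ ∧
      ∀ j ∈ S, ∀ k ∈ T, γ < dist (x j) (x k) := by
  obtain ⟨j, k, hjk⟩ := h
  set G : SimpleGraph (Fin n) :=
    { Adj := fun a b => a ≠ b ∧ dist (x a) (x b) ≤ γ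
      symm := by
        constructor
        intro a b hab
        exact ⟨hab.1.symm, by rw [dist_comm]; exact hab.2⟩
      loopless := by constructor; intro a ha; exact ha.1 rfl } with hG
  have hAdj : ∀ a b, G.Adj a b → dist (x a) (x b) ≤ γ := fun a b hab => And.right hab
  refine ⟨{i | G.Reachable j i}, {i | G.Reachable j i}ᶜ, ⟨j, SimpleGraph.Reachable.refl j⟩, ⟨k, ?_⟩,
    Set.union_compl_self _, Set.inter_compl_self _, ?_⟩
  · -- k is not reachable from j
    intro hreach
    obtain ⟨w⟩ := hreach
    set p := w.bypass with hpdef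
    have hp : p.IsPath := w.bypass_isPath
    have hlen : p.length < n := by
      have := hp.length_lt
      simpa using this
    have hd : dist (x j) (x k) ≤ p.length * γ := dist_le_walk_length x γ G hAdj p
    have hcast : (p.length : ℝ) ≤ (n : ℝ) - 1 := by
      have : (p.length : ℝ) + 1 ≤ (n : ℝ) := by exact_mod_cast hlen
      linarith
    have : dist (x j) (x k) ≤ ((n : ℝ) - 1) * γ :=
      hd.trans (mul_le_mul_of_nonneg_right hcast hγ.le)
    linarith
  · -- cross distances exceed γ
    intro a ha b hb
    by_contra hle
    push_neg at hle
    apply hb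
    rcases eq_or_ne a b with rfl | hab
    · exact ha
    · exact ha.trans (SimpleGraph.Adj.reachable ⟨hab, hle⟩)
end
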